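/- arXiv:1606.04276 — 5 statements merged into one kernel-verified Lean document; each statement's English description precedes it below -/
import Mathlib

section
/- Suppose d ≥ 3 and Assumption [A1] holds. Then there exists a positive constant C such that for all z ∈ ℝ^d, E[1/‖X − z‖] ≤ C. -/
open MeasureTheory ProbabilityTheory Filter
open scoped ENNReal NNReal RealInnerProductSpace Topology

noncomputable section

/-- The sample space `ℝ^d`. -/
abbrev Vec (d : ℕ) := EuclideanSpace ℝ (Fin d)

/-- The parameter space `ℝ^d × ℝ`, equipped with the euclidean (`L²`) norm. -/
abbrev Par (d : ℕ) := WithLp 2 (EuclideanSpace ℝ (Fin d) × ℝ)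

/-- Build an element of the parameter space from a center and a radius. -/
def pmk {d : ℕ} (z : Vec d) (a : ℝ) : Par d :=
  (WithLp.equiv 2 (EuclideanSpace ℝ (Fin d) × ℝ)).symm (z, a)

/-- First (center) component of a parameter. -/
def pz {d : ℕ} (y : Par d) : Vec d := (WithLp.equiv 2 (EuclideanSpace ℝ (Fin d) × ℝ) y).1

/-- Second (radius) component of a parameter. -/
def pa {d : ℕ} (y : Par d) : ℝ := (WithLp.equiv 2 (EuclideanSpace ℝ (Fin d) × ℝ) y).2

/-- `Hgrad x y` is the gradient in `y = (z, a)` of `g(x,y) = (‖x - z‖ - a)²/2`, i.e.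
`(z - x - a (z-x)/‖z-x‖, a - ‖z-x‖)`. -/
def Hgrad {d : ℕ} (x : Vec d) (y : Par d) : Par d :=
  pmk (pz y - x - pa y • (‖pz y - x‖⁻¹ • (pz y - x))) (pa y - ‖pz y - x‖)

/-- `Phi P X y = E[Hgrad (X) y]`, the gradient of `G(y) = E[(‖X-z‖-a)²]/2`. -/
def Phi {Ω : Type*} [MeasurableSpace Ω] {d : ℕ} (P : Measure Ω) (X : Ω → Vec d)
    (y : Par d) : Par d :=
  ∫ ω, Hgrad (X ω) y ∂P

/-- Quadratic form `v ↦ vᵀ Γ(z) v` of the matrix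
`Γ(z) = E[(1/‖X-z‖)(I_d - (X-z)(X-z)ᵀ/‖X-z‖²)]`. -/
def GammaQF {Ω : Type*} [MeasurableSpace Ω] {d : ℕ} (P : Measure Ω) (X : Ω → Vec d)
    (z v : Vec d) : ℝ :=
  ∫ ω, ‖X ω - z‖⁻¹ * (‖v‖ ^ 2 - ⟪X ω - z, v⟫ ^ 2 / ‖X ω - z‖ ^ 2) ∂P

/-- The Hessian matrix `Γ_y` of `G` at `y = (z, a)`, applied to a vector `y' = (z', a')`:
`Γ_y = [[I_d - a E[(1/‖X-z‖)(I_d - (X-z)(X-z)ᵀ/‖X-z‖²)], E[(X-z)/‖X-z‖]], [E[(X-z)/‖X-z‖]ᵀ, 1]]`. -/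
def GammaAt {Ω : Type*} [MeasurableSpace Ω] {d : ℕ} (P : Measure Ω) (X : Ω → Vec d)
    (y y' : Par d) : Par d :=
  pmk (pz y' - pa y • (∫ ω, ‖X ω - pz y‖⁻¹ •
          (pz y' - (⟪X ω - pz y, pz y'⟫ / ‖X ω - pz y‖ ^ 2) • (X ω - pz y)) ∂P)
        + pa y' • ∫ ω, ‖X ω - pz y‖⁻¹ • (X ω - pz y) ∂P)
      (⟪∫ ω, ‖X ω - pz y‖⁻¹ • (X ω - pz y) ∂P, pz y'⟫ + pa y')

section AuxLemmas
open Set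

lemma euclid_ball_hausdorff_lt_top (n : ℕ) :
    μH[(n : ℝ)] (Metric.closedBall (0 : EuclideanSpace ℝ (Fin n)) 1) < ⊤ := by
  have hanti : AntilipschitzWith ((Fintype.card (Fin n) : ℝ≥0) ^ ((1:ℝ≥0∞)/2).toReal)
      (WithLp.equiv 2 (∀ _ : Fin n, ℝ)) := PiLp.antilipschitzWith_ofLp 2 _
  have h1 := hanti.le_hausdorffMeasure_image (d := (n:ℝ)) (by positivity)
      (Metric.closedBall (0 : EuclideanSpace ℝ (Fin n)) 1)
  refine lt_of_le_of_lt h1 ?_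
  have h2 : (WithLp.equiv 2 (∀ _ : Fin n, ℝ)) '' (Metric.closedBall 0 1) ⊆
      Metric.closedBall (0 : ∀ _ : Fin n, ℝ) 1 := by
    have hlip := PiLp.lipschitzWith_ofLp 2 (fun _ : Fin n => ℝ)
    rintro x ⟨y, hy, rfl⟩
    have := hlip.dist_le_mul y 0
    simp only [Metric.mem_closedBall] at *
    simpa using le_trans (by simpa using hlip.dist_le_mul y 0) hy
  have h3 : (μH[(n:ℝ)] : Measure (∀ _ : Fin n, ℝ)) = volume := by
    simpa using (hausdorffMeasure_pi_real (ι := Fin n))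
  refine ENNReal.mul_lt_top ?_ ?_
  · exact ENNReal.rpow_lt_top_of_nonneg (by positivity) ENNReal.coe_ne_top
  · calc μH[(n:ℝ)] ((WithLp.equiv 2 (∀ _ : Fin n, ℝ)) '' (Metric.closedBall 0 1))
        ≤ μH[(n:ℝ)] (Metric.closedBall (0 : ∀ _ : Fin n, ℝ) 1) := measure_mono h2
      _ < ⊤ := by
          rw [h3]
          exact (Metric.isBounded_closedBall).measure_lt_top

lemma proj_lipschitz {E : Type*} [NormedAddCommGroup E] [NormedSpace ℝ E] :
    LipschitzOnWith 2 (fun x : E => ‖x‖⁻¹ • x) {x | 1 ≤ ‖x‖} := by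
  rw [lipschitzOnWith_iff_dist_le_mul]
  intro x hx y hy
  simp only [mem_setOf_eq] at hx hy
  have hx0 : (0:ℝ) < ‖x‖ := lt_of_lt_of_le one_pos hx
  have hy0 : (0:ℝ) < ‖y‖ := lt_of_lt_of_le one_pos hy
  rw [dist_eq_norm, dist_eq_norm]
  have h1 : ‖x‖⁻¹ • x - ‖y‖⁻¹ • y = ‖x‖⁻¹ • (x - y) + (‖x‖⁻¹ - ‖y‖⁻¹) • y := by
    rw [smul_sub, sub_smul]; abel
  rw [h1]
  have h2 : ‖(‖x‖⁻¹ - ‖y‖⁻¹) • y‖ ≤ ‖x - y‖ := by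
    rw [norm_smul, Real.norm_eq_abs]
    have : ‖x‖⁻¹ - ‖y‖⁻¹ = (‖y‖ - ‖x‖) * (‖x‖⁻¹ * ‖y‖⁻¹) := by
      field_simp
    rw [this, abs_mul]
    have habs : |‖y‖ - ‖x‖| ≤ ‖x - y‖ := by
      rw [abs_sub_comm]
      exact abs_norm_sub_norm_le x y
    have h3 : |‖x‖⁻¹ * ‖y‖⁻¹| * ‖y‖ ≤ 1 := by
      rw [abs_mul, abs_of_pos (inv_pos.2 hx0), abs_of_pos (inv_pos.2 hy0)]
      rw [mul_assoc, inv_mul_cancel₀ hy0.ne']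
      simpa using inv_le_one_of_one_le₀ hx
    calc |‖y‖ - ‖x‖| * |‖x‖⁻¹ * ‖y‖⁻¹| * ‖y‖ ≤ ‖x - y‖ * 1 := by
          rw [mul_assoc]
          exact mul_le_mul habs h3 (by positivity) (norm_nonneg _)
      _ = ‖x - y‖ := mul_one _
  calc ‖‖x‖⁻¹ • (x - y) + (‖x‖⁻¹ - ‖y‖⁻¹) • y‖
      ≤ ‖‖x‖⁻¹ • (x - y)‖ + ‖(‖x‖⁻¹ - ‖y‖⁻¹) • y‖ := norm_add_le _ _
    _ ≤ 1 * ‖x - y‖ + ‖x - y‖ := by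
        refine add_le_add ?_ h2
        rw [norm_smul, Real.norm_eq_abs, abs_of_pos (inv_pos.2 hx0)]
        exact mul_le_mul_of_nonneg_right (inv_le_one_of_one_le₀ hx) (norm_nonneg _)
    _ = 2 * ‖x - y‖ := by ring
  
lemma cap_subset {d : ℕ} {p : Vec d} (hp : ‖p‖ = 1) {s : ℝ} (hs1 : s ≤ 1) :
    Metric.sphere (0:Vec d) 1 ∩ Metric.closedBall p s ⊆
      (fun x : Vec d => ‖x‖⁻¹ • x) ''
        ((fun v : Vec d => p + v) ''
          ((((ℝ ∙ p)ᗮ : Submodule ℝ (Vec d)) : Set (Vec d)) ∩ Metric.closedBall 0 (2*s))) := by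
  rintro u ⟨hu1, hu2⟩
  rw [Metric.mem_sphere, dist_zero_right] at hu1
  rw [Metric.mem_closedBall, dist_eq_norm] at hu2
  set a : ℝ := ⟪p, u⟫ with ha
  have hnormsq : ‖u - p‖^2 = 2 - 2*a := by
    rw [@norm_sub_sq_real]
    rw [hu1, hp, real_inner_comm]
    ring
  have hs0 : 0 ≤ s := le_trans (norm_nonneg _) hu2
  have ha2 : 2 - 2*a ≤ s^2 := by
    rw [← hnormsq]
    exact pow_le_pow_left₀ (norm_nonneg _) hu2 2
  have hah : (1:ℝ)/2 ≤ a := by nlinarith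
  have ha0 : 0 < a := by linarith
  refine ⟨p + (a⁻¹ • u - p), ⟨a⁻¹ • u - p, ⟨?_, ?_⟩, rfl⟩, ?_⟩
  · rw [SetLike.mem_coe, Submodule.mem_orthogonal_singleton_iff_inner_right]
    rw [inner_sub_right, real_inner_smul_right, ← ha, real_inner_self_eq_norm_sq, hp]
    field_simp
    norm_num
  · rw [Metric.mem_closedBall, dist_zero_right]
    have hv2 : ‖a⁻¹ • u - p‖^2 = a⁻¹^2 - 1 := by
      have hup : (inner ℝ u p : ℝ) = a := by rw [ha]; exact real_inner_comm p u
      rw [@norm_sub_sq_real, norm_smul, real_inner_smul_left, hu1, hp,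
        Real.norm_eq_abs, abs_of_pos (inv_pos.2 ha0), hup]
      field_simp
      ring
    have ha1 : a ≤ 1 := by
      calc a ≤ ‖p‖ * ‖u‖ := real_inner_le_norm p u
        _ = 1 := by rw [hu1, hp, mul_one]
    have hb2 : a⁻¹ ≤ 2 := by
      rw [inv_le_comm₀ ha0 (by norm_num)]; linarith
    have hsq : ‖a⁻¹ • u - p‖^2 ≤ (2*s)^2 := by
      rw [hv2]
      have h1a2 : 1 - a^2 ≤ s^2 := by nlinarith
      have : a⁻¹^2 - 1 = a⁻¹^2 * (1 - a^2) := by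
        field_simp
      rw [this]
      have h0 : (0:ℝ) ≤ 1 - a^2 := by nlinarith
      have h4 : a⁻¹^2 ≤ 4 := by nlinarith [inv_pos.2 ha0]
      nlinarith [mul_nonneg (by nlinarith : (0:ℝ) ≤ 4 - a⁻¹^2) h0]
    nlinarith [norm_nonneg (a⁻¹ • u - p), sq_nonneg (‖a⁻¹ • u - p‖ - 2*s),
      sq_nonneg (‖a⁻¹ • u - p‖ + 2*s), hs0]
  · show ‖p + (a⁻¹ • u - p)‖⁻¹ • (p + (a⁻¹ • u - p)) = u
    have h5 : p + (a⁻¹ • u - p) = a⁻¹ • u := by abel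
    rw [h5, norm_smul, Real.norm_eq_abs, abs_of_pos (inv_pos.2 ha0), hu1, mul_one,
      inv_inv, smul_smul, mul_inv_cancel₀ ha0.ne', one_smul]

lemma euclid_ball_scale (n : ℕ) {R : ℝ} (hR : 0 < R) :
    μH[(n : ℝ)] (Metric.closedBall (0 : EuclideanSpace ℝ (Fin n)) R) ≤
      ENNReal.ofReal R ^ (n:ℝ) * μH[(n : ℝ)] (Metric.closedBall (0 : EuclideanSpace ℝ (Fin n)) 1) := by
  have hsub : Metric.closedBall (0 : EuclideanSpace ℝ (Fin n)) R ⊆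
      (fun w : EuclideanSpace ℝ (Fin n) => R • w) '' Metric.closedBall 0 1 := by
    intro x hx
    rw [Metric.mem_closedBall, dist_zero_right] at hx
    refine ⟨R⁻¹ • x, ?_, by simp only []; rw [smul_smul, mul_inv_cancel₀ hR.ne', one_smul]⟩
    rw [Metric.mem_closedBall, dist_zero_right, norm_smul, Real.norm_eq_abs,
      abs_of_pos (inv_pos.2 hR)]
    rw [inv_mul_le_iff₀ hR, mul_one]
    exact hx
  calc μH[(n : ℝ)] (Metric.closedBall (0 : EuclideanSpace ℝ (Fin n)) R)
      ≤ μH[(n : ℝ)] ((fun w : EuclideanSpace ℝ (Fin n) => R • w) '' Metric.closedBall 0 1) :=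
        measure_mono hsub
    _ ≤ (‖R‖₊ : ℝ≥0∞) ^ (n:ℝ) * μH[(n : ℝ)] (Metric.closedBall (0 : EuclideanSpace ℝ (Fin n)) 1) :=
        (lipschitzWith_smul R).hausdorffMeasure_image_le (by positivity) _
    _ = ENNReal.ofReal R ^ (n:ℝ) * _ := by
        rw [← Real.enorm_eq_ofReal hR.le]
        rfl

lemma orth_ball_measure {d n : ℕ} (hdn : d = n + 1) {p : Vec d} (hp : ‖p‖ = 1) (R : ℝ) :
    μH[(n : ℝ)] ((((ℝ ∙ p)ᗮ : Submodule ℝ (Vec d)) : Set (Vec d)) ∩ Metric.closedBall 0 R)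
      = μH[(n : ℝ)] (Metric.closedBall (0 : EuclideanSpace ℝ (Fin n)) R) := by
  have hp0 : p ≠ 0 := by intro h; rw [h, norm_zero] at hp; norm_num at hp
  haveI : Fact (Module.finrank ℝ (Vec d) = n + 1) :=
    ⟨by rw [finrank_euclideanSpace_fin, hdn]⟩
  set b := OrthonormalBasis.fromOrthogonalSpanSingleton (𝕜 := ℝ) n hp0
  set L : EuclideanSpace ℝ (Fin n) →ₗᵢ[ℝ] Vec d :=
    ((ℝ ∙ p)ᗮ.subtypeₗᵢ).comp b.repr.symm.toLinearIsometry with hL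
  have himg : L '' Metric.closedBall 0 R =
      (((ℝ ∙ p)ᗮ : Submodule ℝ (Vec d)) : Set (Vec d)) ∩ Metric.closedBall 0 R := by
    ext x
    constructor
    · rintro ⟨w, hw, rfl⟩
      rw [Metric.mem_closedBall, dist_zero_right] at hw
      refine ⟨?_, ?_⟩
      · exact ((b.repr.symm w) : (ℝ ∙ p)ᗮ).2
      · rw [Metric.mem_closedBall, dist_zero_right, L.norm_map]
        exact hw
    · rintro ⟨hx1, hx2⟩
      rw [Metric.mem_closedBall, dist_zero_right] at hx2
      refine ⟨b.repr ⟨x, hx1⟩, ?_, ?_⟩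
      · rw [Metric.mem_closedBall, dist_zero_right, b.repr.norm_map]
        exact hx2
      · simp [hL, LinearIsometry.coe_comp]
  rw [← himg, L.isometry.hausdorffMeasure_image (Or.inl (by positivity))]

lemma cap_bound {d : ℕ} (hd : 3 ≤ d) :
    ∃ K : ℝ, 0 < K ∧ ∀ (x : Vec d) (t : ℝ), 0 < t → t ≤ 1/2 →
      μH[(d:ℝ)-1] (Metric.sphere (0:Vec d) 1 ∩ Metric.closedBall x t) ≤
        ENNReal.ofReal (K * t^2) := by
  set n := d - 1 with hn
  have hdn : d = n + 1 := by omega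
  have hcast : (d:ℝ) - 1 = (n:ℝ) := by
    rw [hdn]; push_cast; ring
  set B := μH[(n : ℝ)] (Metric.closedBall (0 : EuclideanSpace ℝ (Fin n)) 1) with hB
  have hBfin : B < ⊤ := euclid_ball_hausdorff_lt_top n
  refine ⟨8^n * (B.toReal + 1) + 1, by positivity, fun x t ht ht2 => ?_⟩
  rw [hcast]
  by_cases hne : (Metric.sphere (0:Vec d) 1 ∩ Metric.closedBall x t).Nonempty
  · obtain ⟨p, hp1, hp2⟩ := hne
    rw [Metric.mem_sphere, dist_zero_right] at hp1
    have hsub1 : Metric.sphere (0:Vec d) 1 ∩ Metric.closedBall x t ⊆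
        Metric.sphere (0:Vec d) 1 ∩ Metric.closedBall p (2*t) := by
      rintro u ⟨hu1, hu2⟩
      refine ⟨hu1, ?_⟩
      rw [Metric.mem_closedBall]
      calc dist u p ≤ dist u x + dist x p := dist_triangle u x p
        _ ≤ t + t := by
            refine add_le_add (Metric.mem_closedBall.1 hu2) ?_
            rw [dist_comm]
            exact Metric.mem_closedBall.1 hp2
        _ = 2*t := by ring
    set V : Set (Vec d) := (((ℝ ∙ p)ᗮ : Submodule ℝ (Vec d)) : Set (Vec d)) with hV
    have htrans : Isometry (fun v : Vec d => p + v) :=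
      Isometry.of_dist_eq fun a b => by
        rw [dist_eq_norm, dist_eq_norm, add_sub_add_left_eq_sub]
    have hdom : (fun v : Vec d => p + v) '' (V ∩ Metric.closedBall 0 (2*(2*t))) ⊆
        {x : Vec d | 1 ≤ ‖x‖} := by
      rintro _ ⟨v, ⟨hv1, _⟩, rfl⟩
      have hinner : ⟪p, v⟫ = 0 :=
        Submodule.mem_orthogonal_singleton_iff_inner_right.1 hv1
      have hsq : ‖p + v‖^2 = 1 + ‖v‖^2 := by
        rw [@norm_add_sq_real, hinner, hp1]; ring
      simp only [mem_setOf_eq]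
      nlinarith [norm_nonneg (p + v), norm_nonneg v]
    have hlip : LipschitzOnWith 2 (fun x : Vec d => ‖x‖⁻¹ • x)
        ((fun v : Vec d => p + v) '' (V ∩ Metric.closedBall 0 (2*(2*t)))) :=
      proj_lipschitz.mono hdom
    have step2 := cap_subset hp1 (s := 2*t) (by linarith)
    have hBscale := euclid_ball_scale n (R := 2*(2*t)) (by linarith)
    have chain : μH[(n:ℝ)] (Metric.sphere (0:Vec d) 1 ∩ Metric.closedBall x t) ≤
        (2:ℝ≥0∞)^(n:ℝ) * (ENNReal.ofReal (2*(2*t)) ^ (n:ℝ) * B) := by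
      calc μH[(n:ℝ)] (Metric.sphere (0:Vec d) 1 ∩ Metric.closedBall x t)
          ≤ μH[(n:ℝ)] ((fun x : Vec d => ‖x‖⁻¹ • x) ''
              ((fun v : Vec d => p + v) '' (V ∩ Metric.closedBall 0 (2*(2*t))))) := by
            refine measure_mono (hsub1.trans ?_)
            exact step2
        _ ≤ ((2:ℝ≥0) : ℝ≥0∞)^(n:ℝ) *
              μH[(n:ℝ)] ((fun v : Vec d => p + v) '' (V ∩ Metric.closedBall 0 (2*(2*t)))) :=
            hlip.hausdorffMeasure_image_le (by positivity)
        _ = (2:ℝ≥0∞)^(n:ℝ) * μH[(n:ℝ)] (V ∩ Metric.closedBall 0 (2*(2*t))) := by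
            rw [htrans.hausdorffMeasure_image (Or.inl (by positivity))]
            norm_num
        _ = (2:ℝ≥0∞)^(n:ℝ) *
              μH[(n:ℝ)] (Metric.closedBall (0 : EuclideanSpace ℝ (Fin n)) (2*(2*t))) := by
            rw [orth_ball_measure hdn hp1]
        _ ≤ (2:ℝ≥0∞)^(n:ℝ) * (ENNReal.ofReal (2*(2*t)) ^ (n:ℝ) * B) := by
            exact mul_le_mul_right hBscale _
    refine chain.trans ?_
    -- now pure ENNReal arithmetic
    have h2t : ENNReal.ofReal (2*t) ≤ 1 := by
      rw [ENNReal.ofReal_le_one]; linarith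
    have hn2 : (2:ℝ) ≤ (n:ℝ) := by
      have : 2 ≤ n := by omega
      exact_mod_cast this
    have hnn : (0:ℝ) ≤ (n:ℝ) := by positivity
    have e1 : (2:ℝ≥0∞)^(n:ℝ) * (ENNReal.ofReal (2*(2*t)) ^ (n:ℝ) * B)
        = ENNReal.ofReal 4 ^(n:ℝ) * ENNReal.ofReal (2*t) ^ (n:ℝ) * B := by
      rw [← mul_assoc, ← ENNReal.mul_rpow_of_nonneg _ _ hnn, ← ENNReal.mul_rpow_of_nonneg _ _ hnn]
      congr 2
      rw [← ENNReal.ofReal_ofNat 2, ← ENNReal.ofReal_mul (by norm_num),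
        ← ENNReal.ofReal_mul (by norm_num)]
      congr 1
      ring
    rw [e1]
    have e2 : ENNReal.ofReal (2*t) ^ (n:ℝ) ≤ ENNReal.ofReal (2*t) ^ (2:ℝ) :=
      ENNReal.rpow_le_rpow_of_exponent_ge h2t hn2
    have e3 : B ≤ ENNReal.ofReal (B.toReal + 1) := by
      nth_rewrite 1 [← ENNReal.ofReal_toReal hBfin.ne]
      exact ENNReal.ofReal_le_ofReal (by linarith)
    calc ENNReal.ofReal 4 ^(n:ℝ) * ENNReal.ofReal (2*t) ^ (n:ℝ) * B
        ≤ ENNReal.ofReal 4 ^(n:ℝ) * ENNReal.ofReal (2*t) ^ (2:ℝ) *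
            ENNReal.ofReal (B.toReal + 1) := by
          exact mul_le_mul' (mul_le_mul_right e2 _) e3
      _ = ENNReal.ofReal ((4:ℝ)^(n:ℝ) * (2*t)^(2:ℝ) * (B.toReal + 1)) := by
          rw [ENNReal.ofReal_rpow_of_nonneg (by norm_num) hnn,
            ENNReal.ofReal_rpow_of_nonneg (by linarith) (by norm_num : (0:ℝ) ≤ 2),
            ← ENNReal.ofReal_mul (by positivity), ← ENNReal.ofReal_mul (by positivity)]
      _ ≤ ENNReal.ofReal ((8^n * (B.toReal + 1) + 1) * t^2) := by
          refine ENNReal.ofReal_le_ofReal ?_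
          rw [show ((4:ℝ)^(n:ℝ)) = 4^n from Real.rpow_natCast 4 n,
            show ((2*t:ℝ)^(2:ℝ)) = (2*t)^(2:ℕ) from Real.rpow_two (2*t) ▸ rfl]
          have h48 : (4:ℝ)*4^n ≤ 8^n := by
            have h2n : (4:ℝ) ≤ 2^n := by
              calc (4:ℝ) = 2^2 := by norm_num
                _ ≤ 2^n := pow_le_pow_right₀ (by norm_num) (by omega)
            calc (4:ℝ)*4^n ≤ 2^n * 4^n := by nlinarith [pow_nonneg (by norm_num : (0:ℝ) ≤ 4) n]
              _ = 8^n := by rw [← mul_pow]; norm_num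
          have hB0 : 0 ≤ B.toReal := ENNReal.toReal_nonneg
          nlinarith [mul_nonneg (mul_nonneg (sub_nonneg.2 h48)
            (by linarith : (0:ℝ) ≤ B.toReal + 1)) (sq_nonneg t), sq_nonneg t]
  · rw [Set.not_nonempty_iff_eq_empty] at hne
    rw [hne, measure_empty]
    positivity

lemma lint_inv_le {d : ℕ} (ν : Measure (Vec d)) [IsProbabilityMeasure ν]
    {K : ℝ} (hK : 0 < K)
    (hball : ∀ (x : Vec d) (t : ℝ), 0 < t →
      ν (Metric.closedBall x t) ≤ ENNReal.ofReal (K * t^2))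
    (c : Vec d) {ρ : ℝ} (hρ : 0 < ρ) :
    ∫⁻ u, ENNReal.ofReal ‖c + ρ • u‖⁻¹ ∂ν ≤ ENNReal.ofReal (2 * Real.sqrt K / ρ) := by
  set f : Vec d → ℝ := fun u => ‖c + ρ • u‖⁻¹ with hf
  have hfm : Measurable f := ((continuous_norm.comp
    (continuous_const.add (continuous_const_smul ρ))).measurable).inv
  have hnn : 0 ≤ᵐ[ν] f := Filter.Eventually.of_forall fun u => by positivity
  rw [lintegral_eq_lintegral_meas_lt ν hnn hfm.aemeasurable]
  set T : ℝ := Real.sqrt K / ρ with hT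
  have hK' : 0 < Real.sqrt K := Real.sqrt_pos.2 hK
  have hT0 : 0 < T := by positivity
  have hsplit : Ioi (0:ℝ) = Ioc 0 T ∪ Ioi T := (Set.Ioc_union_Ioi_eq_Ioi hT0.le).symm
  rw [hsplit, lintegral_union measurableSet_Ioi (Set.Ioc_disjoint_Ioi le_rfl)]
  have hb1 : ∫⁻ t in Ioc (0:ℝ) T, ν {a | t < f a} ≤ ENNReal.ofReal T := by
    calc ∫⁻ t in Ioc (0:ℝ) T, ν {a | t < f a} ≤ ∫⁻ _ in Ioc (0:ℝ) T, 1 :=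
          lintegral_mono fun t => prob_le_one
      _ = ENNReal.ofReal T := by
          rw [setLIntegral_one, Real.volume_Ioc]
          simp
  have hsetb : ∀ t : ℝ, T < t → ν {a | t < f a} ≤ ENNReal.ofReal (K/ρ^2 * t^(-2:ℝ)) := by
    intro t htT
    have ht0 : 0 < t := hT0.trans htT
    have hsub : {a : Vec d | t < f a} ⊆ Metric.closedBall (-(ρ⁻¹ • c)) ((ρ*t)⁻¹) := by
      intro u hu
      simp only [mem_setOf_eq, hf] at hu
      have h1 : ‖c + ρ • u‖ < t⁻¹ := by
        rcases eq_or_lt_of_le (norm_nonneg (c + ρ • u)) with h | h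
        · rw [← h]; positivity
        · exact (lt_inv_comm₀ h ht0).2 hu
      rw [Metric.mem_closedBall, dist_eq_norm, sub_neg_eq_add]
      have h2 : ρ • (u + ρ⁻¹ • c) = c + ρ • u := by
        rw [smul_add, smul_inv_smul₀ hρ.ne']; abel
      have h3 : ‖c + ρ • u‖ = ρ * ‖u + ρ⁻¹ • c‖ := by
        rw [← h2, norm_smul, Real.norm_eq_abs, abs_of_pos hρ]
      rw [h3] at h1
      rw [mul_inv]
      calc ‖u + ρ⁻¹ • c‖ = ρ⁻¹ * (ρ * ‖u + ρ⁻¹ • c‖) := by field_simp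
        _ ≤ ρ⁻¹ * t⁻¹ := mul_le_mul_of_nonneg_left h1.le (inv_pos.2 hρ).le
    calc ν {a : Vec d | t < f a} ≤ ν (Metric.closedBall (-(ρ⁻¹ • c)) ((ρ*t)⁻¹)) :=
          measure_mono hsub
      _ ≤ ENNReal.ofReal (K * ((ρ*t)⁻¹)^2) := hball _ _ (by positivity)
      _ = ENNReal.ofReal (K/ρ^2 * t^(-2:ℝ)) := by
          have heq : K * ((ρ*t)⁻¹)^2 = K/ρ^2 * t^(-2:ℝ) := by
            rw [Real.rpow_neg ht0.le, show ((2:ℝ)) = ((2:ℕ):ℝ) by norm_num,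
              Real.rpow_natCast]
            ring
          rw [heq]
  have hb2 : ∫⁻ t in Ioi T, ν {a | t < f a} ≤ ENNReal.ofReal T := by
    have hInt : IntegrableOn (fun t : ℝ => K/ρ^2 * t^(-2:ℝ)) (Ioi T) := by
      exact (integrableOn_Ioi_rpow_of_lt (by norm_num) hT0).const_mul _
    calc ∫⁻ t in Ioi T, ν {a | t < f a}
        ≤ ∫⁻ t in Ioi T, ENNReal.ofReal (K/ρ^2 * t^(-2:ℝ)) := by
          refine setLIntegral_mono (by fun_prop) hsetb
      _ = ENNReal.ofReal (∫ t in Ioi T, K/ρ^2 * t^(-2:ℝ)) := by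
          refine (MeasureTheory.ofReal_integral_eq_lintegral_ofReal hInt
            (((ae_restrict_iff' measurableSet_Ioi).2 (Filter.Eventually.of_forall
              fun t ht => ?_)))).symm
          have ht0 : (0:ℝ) < t := hT0.trans ht
          have := Real.rpow_nonneg ht0.le (-2:ℝ)
          positivity
      _ = ENNReal.ofReal T := by
          rw [MeasureTheory.integral_const_mul, integral_Ioi_rpow_of_lt (by norm_num) hT0]
          congr 1
          rw [show (-2:ℝ)+1 = -1 by norm_num, Real.rpow_neg_one, hT]
          have hs : Real.sqrt K * Real.sqrt K = K := Real.mul_self_sqrt hK.le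
          field_simp
          nlinarith [hs]
  calc (∫⁻ t in Ioc (0:ℝ) T, ν {a | t < f a}) + ∫⁻ t in Ioi T, ν {a | t < f a}
      ≤ ENNReal.ofReal T + ENNReal.ofReal T := add_le_add hb1 hb2
    _ = ENNReal.ofReal (2 * Real.sqrt K / ρ) := by
        rw [← ENNReal.ofReal_add hT0.le hT0.le, hT]
        congr 1
        ring

end AuxLemmas

theorem statement9
    {Ω : Type*} [MeasurableSpace Ω] (P : Measure Ω) [IsProbabilityMeasure P]
    {d : ℕ} (hd : 3 ≤ d)
    (μ : Vec d) (r : ℝ) (hr : 0 < r)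
    (W : Ω → ℝ) (U : Ω → Vec d)
    (hWm : Measurable W) (hUm : Measurable U)
    (hWpos : ∀ ω, 0 < W ω) (hUnorm : ∀ ω, ‖U ω‖ = 1)
    (hindep : IndepFun W U P)
    (X : Ω → Vec d) (hX : ∀ ω, X ω = μ + (r * W ω) • U ω)
    (S : Set (Vec d)) (hSm : MeasurableSet S) (hSsub : S ⊆ Metric.sphere (0 : Vec d) 1)
    (hSpos : 0 < μH[(d : ℝ) - 1] S) (hSfin : μH[(d : ℝ) - 1] S < ⊤)
    (hlaw : Measure.map U P = (μH[(d : ℝ) - 1] S)⁻¹ • (μH[(d : ℝ) - 1] : Measure (Vec d)).restrict S)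
    (hA1 : Integrable (fun ω => (‖X ω - μ‖ ^ 2)⁻¹) P)
    :
    ∃ C : ℝ, 0 < C ∧ ∀ z : Vec d,
      ∫⁻ ω, ENNReal.ofReal ‖X ω - z‖⁻¹ ∂P ≤ ENNReal.ofReal C := by
  obtain ⟨K, hKpos, hcap⟩ := cap_bound hd
  set ν := Measure.map U P with hν
  haveI hνprob : IsProbabilityMeasure ν := Measure.isProbabilityMeasure_map hUm.aemeasurable
  set β : ℝ := (μH[(d:ℝ)-1] S)⁻¹.toReal + 1 with hβ
  have hβpos : 0 < β := by
    rw [hβ]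
    positivity
  set K₂ : ℝ := β * K + 4 with hK₂def
  have hK₂pos : 0 < K₂ := by positivity
  -- ball bound for ν
  have hball : ∀ (x : Vec d) (t : ℝ), 0 < t →
      ν (Metric.closedBall x t) ≤ ENNReal.ofReal (K₂ * t^2) := by
    intro x t ht
    by_cases ht2 : t ≤ 1/2
    · have h1 : ν (Metric.closedBall x t) =
          (μH[(d:ℝ)-1] S)⁻¹ * μH[(d:ℝ)-1] (Metric.closedBall x t ∩ S) := by
        rw [hlaw, Measure.smul_apply, Measure.restrict_apply' hSm, smul_eq_mul]
      have h2 : μH[(d:ℝ)-1] (Metric.closedBall x t ∩ S) ≤ ENNReal.ofReal (K * t^2) := by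
        refine le_trans (measure_mono ?_) (hcap x t ht ht2)
        intro u ⟨hu1, hu2⟩
        exact ⟨hSsub hu2, hu1⟩
      have h3 : (μH[(d:ℝ)-1] S)⁻¹ ≤ ENNReal.ofReal β := by
        rw [hβ]
        nth_rewrite 1 [← ENNReal.ofReal_toReal (ENNReal.inv_ne_top.2 hSpos.ne')]
        exact ENNReal.ofReal_le_ofReal (by linarith)
      calc ν (Metric.closedBall x t)
          = (μH[(d:ℝ)-1] S)⁻¹ * μH[(d:ℝ)-1] (Metric.closedBall x t ∩ S) := h1
        _ ≤ ENNReal.ofReal β * ENNReal.ofReal (K * t^2) := mul_le_mul' h3 h2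
        _ = ENNReal.ofReal (β * (K * t^2)) := by
            rw [← ENNReal.ofReal_mul hβpos.le]
        _ ≤ ENNReal.ofReal (K₂ * t^2) := by
            refine ENNReal.ofReal_le_ofReal ?_
            rw [hK₂def]
            nlinarith [sq_nonneg t]
    · push_neg at ht2
      calc ν (Metric.closedBall x t) ≤ 1 := prob_le_one
        _ ≤ ENNReal.ofReal (K₂ * t^2) := by
            rw [show (1:ℝ≥0∞) = ENNReal.ofReal 1 by simp]
            refine ENNReal.ofReal_le_ofReal ?_
            rw [hK₂def]
            nlinarith [mul_pos ht ht, sq_nonneg (t - 1/2),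
              mul_nonneg (mul_nonneg hβpos.le hKpos.le) (sq_nonneg t)]
  set C₁ : ℝ := 2 * Real.sqrt K₂ with hC₁
  have hC₁pos : 0 < C₁ := by
    have := Real.sqrt_pos.2 hK₂pos
    positivity
  set M : ℝ := ∫ ω, (‖X ω - μ‖ ^ 2)⁻¹ ∂P with hM
  have hM0 : 0 ≤ M := integral_nonneg fun ω => by positivity
  refine ⟨C₁ * (1 + M) + 1, by positivity, fun z => ?_⟩
  -- measurability of X
  have hXm : Measurable X := by
    have : X = fun ω => μ + (r * W ω) • U ω := funext hX
    rw [this]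
    exact measurable_const.add ((measurable_const.mul hWm).smul hUm)
  set g : ℝ × Vec d → ℝ≥0∞ := fun q => ENNReal.ofReal ‖(μ - z) + (r * q.1) • q.2‖⁻¹ with hg
  have hgm : Measurable g := by
    apply ENNReal.measurable_ofReal.comp
    apply Measurable.inv
    apply Measurable.norm
    exact measurable_const.add ((measurable_const.mul measurable_fst).smul measurable_snd)
  have hXz : ∀ ω, ENNReal.ofReal ‖X ω - z‖⁻¹ = g (W ω, U ω) := by
    intro ω
    rw [hg]
    congr 2
    rw [hX ω]
    rw [add_sub_right_comm]
  have hprod : Measure.map (fun ω => (W ω, U ω)) P = (Measure.map W P).prod ν := by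
    rw [hν]
    exact (indepFun_iff_map_prod_eq_prod_map_map hWm.aemeasurable hUm.aemeasurable).1 hindep
  have step1 : ∫⁻ ω, ENNReal.ofReal ‖X ω - z‖⁻¹ ∂P
      = ∫⁻ x, ∫⁻ u, g (x, u) ∂ν ∂(Measure.map W P) := by
    calc ∫⁻ ω, ENNReal.ofReal ‖X ω - z‖⁻¹ ∂P
        = ∫⁻ ω, g (W ω, U ω) ∂P := by
          exact lintegral_congr fun ω => hXz ω
      _ = ∫⁻ q, g q ∂(Measure.map (fun ω => (W ω, U ω)) P) :=
          (lintegral_map hgm (hWm.prodMk hUm)).symm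
      _ = ∫⁻ q, g q ∂((Measure.map W P).prod ν) := by rw [hprod]
      _ = ∫⁻ x, ∫⁻ u, g (x, u) ∂ν ∂(Measure.map W P) :=
          lintegral_prod g hgm.aemeasurable
  rw [step1]
  -- a.e. positivity of W under map
  have haeW : ∀ᵐ x ∂(Measure.map W P), 0 < x := by
    rw [ae_iff]
    have : {x : ℝ | ¬ 0 < x} = Set.Iic 0 := by ext x; simp
    rw [this, Measure.map_apply hWm measurableSet_Iic]
    have : W ⁻¹' Set.Iic 0 = ∅ := by
      ext ω; simp [not_le.2 (hWpos ω)]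
    rw [this, measure_empty]
  have hinner : ∀ᵐ x ∂(Measure.map W P),
      (∫⁻ u, g (x, u) ∂ν) ≤ ENNReal.ofReal (C₁ / (r * x)) := by
    filter_upwards [haeW] with x hx
    have hrx : 0 < r * x := mul_pos hr hx
    have := lint_inv_le ν hK₂pos hball (μ - z) hrx
    rw [hC₁]
    exact this
  calc ∫⁻ x, ∫⁻ u, g (x, u) ∂ν ∂(Measure.map W P)
      ≤ ∫⁻ x, ENNReal.ofReal (C₁ / (r * x)) ∂(Measure.map W P) := lintegral_mono_ae hinner
    _ = ∫⁻ ω, ENNReal.ofReal (C₁ / (r * W ω)) ∂P := by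
        refine lintegral_map ?_ hWm
        fun_prop
    _ ≤ ∫⁻ ω, (ENNReal.ofReal C₁ + ENNReal.ofReal C₁ *
          ENNReal.ofReal ((‖X ω - μ‖^2)⁻¹)) ∂P := by
        refine lintegral_mono fun ω => ?_
        have hXμ : ‖X ω - μ‖ = r * W ω := by
          rw [hX ω, add_sub_cancel_left, norm_smul, Real.norm_eq_abs,
            abs_of_pos (mul_pos hr (hWpos ω)), hUnorm, mul_one]
        have hrw : 0 < r * W ω := mul_pos hr (hWpos ω)
        have key : C₁ / (r * W ω) ≤ C₁ + C₁ * ((‖X ω - μ‖^2)⁻¹) := by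
          rw [hXμ]
          have h1 : (r * W ω)⁻¹ ≤ 1 + ((r * W ω)^2)⁻¹ := by
            have h2 : ∀ y : ℝ, y ≤ 1 + y^2 := fun y => by nlinarith [sq_nonneg (y-1)]
            have := h2 (r * W ω)⁻¹
            calc (r * W ω)⁻¹ ≤ 1 + ((r * W ω)⁻¹)^2 := this
              _ = 1 + ((r * W ω)^2)⁻¹ := by rw [inv_pow]
          calc C₁ / (r * W ω) = C₁ * (r * W ω)⁻¹ := by ring
            _ ≤ C₁ * (1 + ((r * W ω)^2)⁻¹) :=
                mul_le_mul_of_nonneg_left h1 hC₁pos.le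
            _ = C₁ + C₁ * (((r * W ω)^2)⁻¹) := by ring
        calc ENNReal.ofReal (C₁ / (r * W ω)) ≤
            ENNReal.ofReal (C₁ + C₁ * ((‖X ω - μ‖^2)⁻¹)) := ENNReal.ofReal_le_ofReal key
          _ = ENNReal.ofReal C₁ + ENNReal.ofReal C₁ * ENNReal.ofReal ((‖X ω - μ‖^2)⁻¹) := by
              rw [ENNReal.ofReal_add hC₁pos.le (by positivity),
                ENNReal.ofReal_mul hC₁pos.le]
    _ = ENNReal.ofReal C₁ + ENNReal.ofReal C₁ * ∫⁻ ω, ENNReal.ofReal ((‖X ω - μ‖^2)⁻¹) ∂P := by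
        rw [lintegral_add_left measurable_const, lintegral_const_mul _ (by fun_prop),
          lintegral_const, measure_univ, mul_one]
    _ = ENNReal.ofReal C₁ + ENNReal.ofReal C₁ * ENNReal.ofReal M := by
        rw [hM, MeasureTheory.ofReal_integral_eq_lintegral_ofReal hA1
          (Eventually.of_forall fun ω => by positivity)]
    _ ≤ ENNReal.ofReal (C₁ * (1 + M) + 1) := by
        rw [← ENNReal.ofReal_mul hC₁pos.le, ← ENNReal.ofReal_add hC₁pos.le (by positivity)]
        refine ENNReal.ofReal_le_ofReal ?_
        nlinarith



end
end

section
/- Under Assumptions [A1], [A2] and [A3], for every compact convex subset K of ℝ^d × ℝ containing θ, there exists a positive constant C_θ such that for all y ∈ K, ‖Φ(y) − Γ_θ(y − θ)‖ ≤ C_θ·‖y − θ‖². -/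
open MeasureTheory ProbabilityTheory Filter
open scoped ENNReal NNReal RealInnerProductSpace Topology

noncomputable section

section Taylor

variable {F : Type*} [NormedAddCommGroup F] [InnerProductSpace ℝ F]

lemma taylor1 (b δ : F) (hb : b ≠ 0) :
    |‖b + δ‖ - ‖b‖ - ⟪b, δ⟫ / ‖b‖| ≤ 12 * ‖δ‖ ^ 2 / ‖b‖ := by
  set n := ‖b‖ with hn
  set m := ‖b + δ‖ with hm
  set t := ⟪b, δ⟫ with ht
  have hn0 : 0 < n := norm_pos_iff.mpr hb
  have hm0 : 0 ≤ m := norm_nonneg _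
  have hd0 : 0 ≤ ‖δ‖ := norm_nonneg _
  set q := t / n with hqdef
  have hqt : t = q * n := by rw [hqdef, div_mul_cancel₀ _ (ne_of_gt hn0)]
  have htle : |t| ≤ n * ‖δ‖ := abs_real_inner_le_norm b δ
  have hq : |q| ≤ ‖δ‖ := by
    rw [hqdef, abs_div, abs_of_pos hn0, div_le_iff₀ hn0]
    linarith [htle]
  have hq2 : q ^ 2 ≤ ‖δ‖ ^ 2 := sq_le_sq' (by linarith [abs_le.mp hq]) (abs_le.mp hq).2
  have hbase : m ^ 2 = n ^ 2 + 2 * t + ‖δ‖ ^ 2 := by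
    rw [hm, hn, ht]; exact norm_add_sq_real b δ
  have hm2 : m ^ 2 = n ^ 2 + 2 * (q * n) + ‖δ‖ ^ 2 := by
    linear_combination hbase + 2 * hqt
  have hmn : |m - n| ≤ ‖δ‖ := by
    simpa using abs_norm_sub_norm_le (b + δ) b
  by_cases hc : ‖δ‖ ≤ n / 2
  · have hs0 : n / 2 ≤ n + q := by linarith [abs_le.mp hq]
    have hprod : (m - (n + q)) * (m + (n + q)) = ‖δ‖ ^ 2 - q ^ 2 := by
      linear_combination hm2
    have hms : 0 ≤ m - (n + q) := by nlinarith [hprod, hq2]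
    rw [abs_le]
    constructor
    · have h0 : (0:ℝ) ≤ 12 * ‖δ‖ ^ 2 / n := by positivity
      linarith
    · rw [le_div_iff₀ hn0]
      nlinarith [mul_nonneg hms (by linarith : (0:ℝ) ≤ 2 * (m + (n + q)) - n), hprod, hq2]
  · push_neg at hc
    have h1 : |m - n - q| ≤ ‖δ‖ + ‖δ‖ := by
      calc |m - n - q| ≤ |m - n| + |q| := abs_sub _ _
        _ ≤ ‖δ‖ + ‖δ‖ := add_le_add hmn hq
    rw [show m - n - t / n = m - n - q from rfl] at *
    refine h1.trans ?_
    rw [le_div_iff₀ hn0]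
    nlinarith

set_option maxHeartbeats 1000000 in
lemma taylor2 (b δ : F) (hb : b ≠ 0) :
    ‖‖b + δ‖⁻¹ • (b + δ) - ‖b‖⁻¹ • b - (‖b‖⁻¹ • δ - (⟪b, δ⟫ / ‖b‖ ^ 3) • b)‖
      ≤ 12 * ‖δ‖ ^ 2 / ‖b‖ ^ 2 := by
  set n := ‖b‖ with hn
  set m := ‖b + δ‖ with hm
  set t := ⟪b, δ⟫ with ht
  set dd := ‖δ‖ with hdd
  have hn0 : 0 < n := norm_pos_iff.mpr hb
  have hm0 : 0 ≤ m := norm_nonneg _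
  have hd0 : 0 ≤ dd := norm_nonneg _
  have hn' : n ≠ 0 := ne_of_gt hn0
  have htle : |t| ≤ n * dd := abs_real_inner_le_norm b δ
  have hbase : m ^ 2 = n ^ 2 + 2 * t + dd ^ 2 := by
    rw [hm, hn, ht, hdd]; exact norm_add_sq_real b δ
  have hmn : |m - n| ≤ dd := by
    simpa using abs_norm_sub_norm_le (b + δ) b
  have hmn' := abs_le.mp hmn
  by_cases hc : dd ≤ n / 2
  · have hm1 : n / 2 ≤ m := by linarith [hmn'.1]
    have hmpos : 0 < m := by linarith
    have hm' : m ≠ 0 := ne_of_gt hmpos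
    have hE : ‖b + δ‖⁻¹ • (b + δ) - ‖b‖⁻¹ • b - (‖b‖⁻¹ • δ - (⟪b, δ⟫ / ‖b‖ ^ 3) • b)
        = (m⁻¹ - n⁻¹ + t / n ^ 3) • b + (m⁻¹ - n⁻¹) • δ := by
      rw [← hn, ← hm, ← ht]
      module
    have hD0 : 0 < m * n ^ 3 * (m + n) := by positivity
    have hps : (m⁻¹ - n⁻¹ + t / n ^ 3) * (m * n ^ 3 * (m + n))
        = t * (m - n) * (m + 2 * n) - n ^ 2 * dd ^ 2 := by
      have e : (m⁻¹ - n⁻¹ + t / n ^ 3) * (m * n ^ 3 * (m + n))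
          = n ^ 3 * (m + n) - m * n ^ 2 * (m + n) + t * m * (m + n) := by
        field_simp
      rw [e]; linear_combination (-n ^ 2) * hbase
    have hqs : (m⁻¹ - n⁻¹) * (m * n) = n - m := by
      field_simp
    have habs : |m⁻¹ - n⁻¹ + t / n ^ 3| * (m * n ^ 3 * (m + n)) ≤ 9 / 2 * (n ^ 2 * dd ^ 2) := by
      rw [← abs_of_pos hD0, ← abs_mul, hps]
      have e2 : m + 2 * n ≤ 7 / 2 * n := by linarith [hmn'.2]
      have e1 : |t| * |m - n| ≤ n * dd * dd :=
        mul_le_mul htle hmn (abs_nonneg _) (by positivity)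
      have e3 : |t| * |m - n| * (m + 2 * n) ≤ n * dd * dd * (7 / 2 * n) :=
        mul_le_mul e1 e2 (by linarith) (by positivity)
      calc |t * (m - n) * (m + 2 * n) - n ^ 2 * dd ^ 2|
          ≤ |t * (m - n) * (m + 2 * n)| + |n ^ 2 * dd ^ 2| := abs_sub _ _
        _ = |t| * |m - n| * (m + 2 * n) + n ^ 2 * dd ^ 2 := by
            rw [abs_mul, abs_mul, abs_of_pos (by linarith : (0:ℝ) < m + 2 * n),
              abs_of_nonneg (by positivity : (0:ℝ) ≤ n ^ 2 * dd ^ 2)]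
        _ ≤ 9 / 2 * (n ^ 2 * dd ^ 2) := by nlinarith [e3]
    have hD : 3 / 4 * n ^ 5 ≤ m * n ^ 3 * (m + n) := by
      have h7 : n / 2 * (3 / 2 * n) ≤ m * (m + n) :=
        mul_le_mul hm1 (by linarith) (by positivity) (by linarith)
      nlinarith [mul_le_mul_of_nonneg_right h7 (le_of_lt (pow_pos hn0 3)), pow_pos hn0 3]
    have hpn : |m⁻¹ - n⁻¹ + t / n ^ 3| * n ≤ 6 * dd ^ 2 / n ^ 2 := by
      have h5 := (mul_le_mul_of_nonneg_left hD (abs_nonneg (m⁻¹ - n⁻¹ + t / n ^ 3))).trans habs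
      rw [le_div_iff₀ (by positivity : (0:ℝ) < n ^ 2)]
      nlinarith [h5, mul_pos hn0 hn0, abs_nonneg (m⁻¹ - n⁻¹ + t / n ^ 3)]
    have hqd : |m⁻¹ - n⁻¹| * dd ≤ 2 * dd ^ 2 / n ^ 2 := by
      have h2 : |m⁻¹ - n⁻¹| * (m * n) = |m - n| := by
        rw [← abs_of_pos (mul_pos hmpos hn0), ← abs_mul, hqs, abs_sub_comm]
      have h3 : |m⁻¹ - n⁻¹| * n ^ 2 ≤ 2 * dd := by
        nlinarith [h2, hmn'.2, abs_nonneg (m⁻¹ - n⁻¹),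
          mul_le_mul_of_nonneg_left (show n ^ 2 ≤ 2 * (m * n) by nlinarith)
            (abs_nonneg (m⁻¹ - n⁻¹))]
      rw [le_div_iff₀ (by positivity : (0:ℝ) < n ^ 2)]
      nlinarith [mul_le_mul_of_nonneg_right h3 hd0]
    rw [hE]
    calc ‖(m⁻¹ - n⁻¹ + t / n ^ 3) • b + (m⁻¹ - n⁻¹) • δ‖
        ≤ ‖(m⁻¹ - n⁻¹ + t / n ^ 3) • b‖ + ‖(m⁻¹ - n⁻¹) • δ‖ := norm_add_le _ _
      _ = |m⁻¹ - n⁻¹ + t / n ^ 3| * n + |m⁻¹ - n⁻¹| * dd := by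
          rw [norm_smul, norm_smul, Real.norm_eq_abs, Real.norm_eq_abs, ← hn, ← hdd]
      _ ≤ 6 * dd ^ 2 / n ^ 2 + 2 * dd ^ 2 / n ^ 2 := add_le_add hpn hqd
      _ = 8 * (dd ^ 2 / n ^ 2) := by ring
      _ ≤ 12 * dd ^ 2 / n ^ 2 := by
          have h0 : (0:ℝ) ≤ dd ^ 2 / n ^ 2 := by positivity
          have h12 : 12 * dd ^ 2 / n ^ 2 = 12 * (dd ^ 2 / n ^ 2) := by ring
          linarith [h12]
  · push_neg at hc
    have h1 : ‖m⁻¹ • (b + δ)‖ ≤ 1 := by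
      rcases eq_or_ne m 0 with h | h
      · simp [h]
      · rw [norm_smul, Real.norm_eq_abs, abs_inv, abs_of_nonneg hm0, ← hm,
          inv_mul_cancel₀ h]
    have h2 : ‖n⁻¹ • b‖ = 1 := by
      rw [norm_smul, Real.norm_eq_abs, abs_inv, abs_of_pos hn0, ← hn,
        inv_mul_cancel₀ hn']
    have h3 : ‖n⁻¹ • δ‖ = dd / n := by
      rw [norm_smul, Real.norm_eq_abs, abs_inv, abs_of_pos hn0, ← hdd]; ring
    have h4 : ‖(t / n ^ 3) • b‖ ≤ dd / n := by
      rw [norm_smul, Real.norm_eq_abs, abs_div, abs_of_pos (by positivity : (0:ℝ) < n ^ 3), ← hn]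
      rw [div_mul_eq_mul_div, div_le_div_iff₀ (by positivity) hn0]
      nlinarith [htle]
    have tri : ‖‖b + δ‖⁻¹ • (b + δ) - ‖b‖⁻¹ • b - (‖b‖⁻¹ • δ - (⟪b, δ⟫ / ‖b‖ ^ 3) • b)‖
        ≤ 1 + 1 + (dd / n + dd / n) := by
      rw [← hn, ← hm, ← ht]
      calc ‖m⁻¹ • (b + δ) - n⁻¹ • b - (n⁻¹ • δ - (t / n ^ 3) • b)‖
          ≤ ‖m⁻¹ • (b + δ) - n⁻¹ • b‖ + ‖n⁻¹ • δ - (t / n ^ 3) • b‖ := norm_sub_le _ _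
        _ ≤ (‖m⁻¹ • (b + δ)‖ + ‖n⁻¹ • b‖) + (‖n⁻¹ • δ‖ + ‖(t / n ^ 3) • b‖) :=
            add_le_add (norm_sub_le _ _) (norm_sub_le _ _)
        _ ≤ 1 + 1 + (dd / n + dd / n) := by
            rw [h2, h3]; exact add_le_add (add_le_add h1 le_rfl) (add_le_add le_rfl h4)
    refine tri.trans ?_
    have e1 : (1:ℝ) ≤ 4 * dd ^ 2 / n ^ 2 := by
      rw [le_div_iff₀ (by positivity : (0:ℝ) < n ^ 2)]; nlinarith
    have e2 : dd / n ≤ 2 * dd ^ 2 / n ^ 2 := by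
      rw [div_le_div_iff₀ hn0 (by positivity : (0:ℝ) < n ^ 2)]
      nlinarith [mul_le_mul_of_nonneg_right (show n ≤ 2 * dd by linarith)
        (mul_nonneg hd0 hn0.le)]
    calc (1:ℝ) + 1 + (dd / n + dd / n)
        ≤ 4 * dd ^ 2 / n ^ 2 + 4 * dd ^ 2 / n ^ 2 + (2 * dd ^ 2 / n ^ 2 + 2 * dd ^ 2 / n ^ 2) :=
          add_le_add (add_le_add e1 e1) (add_le_add e2 e2)
      _ = 12 * dd ^ 2 / n ^ 2 := by ring

lemma dlin_bound (b δ : F) (hb : b ≠ 0) :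
    ‖‖b‖⁻¹ • δ - (⟪b, δ⟫ / ‖b‖ ^ 3) • b‖ ≤ 2 * ‖δ‖ / ‖b‖ := by
  have hn0 : 0 < ‖b‖ := norm_pos_iff.mpr hb
  have htle : |⟪b, δ⟫| ≤ ‖b‖ * ‖δ‖ := abs_real_inner_le_norm b δ
  calc ‖‖b‖⁻¹ • δ - (⟪b, δ⟫ / ‖b‖ ^ 3) • b‖
      ≤ ‖‖b‖⁻¹ • δ‖ + ‖(⟪b, δ⟫ / ‖b‖ ^ 3) • b‖ := norm_sub_le _ _
    _ = ‖b‖⁻¹ * ‖δ‖ + |⟪b, δ⟫| / ‖b‖ ^ 3 * ‖b‖ := by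
        rw [norm_smul, norm_smul, Real.norm_eq_abs, Real.norm_eq_abs, abs_inv,
          abs_of_pos hn0, abs_div, abs_of_pos (by positivity : (0:ℝ) < ‖b‖ ^ 3)]
    _ ≤ 2 * ‖δ‖ / ‖b‖ := by
        rw [div_mul_eq_mul_div]
        rw [show 2 * ‖δ‖ / ‖b‖ = ‖δ‖ / ‖b‖ + ‖δ‖ / ‖b‖ by ring]
        have e1 : ‖b‖⁻¹ * ‖δ‖ = ‖δ‖ / ‖b‖ := by ring
        have e2 : |⟪b, δ⟫| * ‖b‖ / ‖b‖ ^ 3 ≤ ‖δ‖ / ‖b‖ := by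
          rw [div_le_div_iff₀ (by positivity) hn0]
          nlinarith [mul_le_mul_of_nonneg_right htle
            (mul_nonneg (norm_nonneg b) (norm_nonneg b))]
        linarith [e1, e2]

lemma norm_normalize_le_one (v : F) : ‖‖v‖⁻¹ • v‖ ≤ 1 := by
  rcases eq_or_ne v 0 with h | h
  · simp [h]
  · rw [norm_smul, Real.norm_eq_abs, abs_inv, abs_of_nonneg (norm_nonneg v),
      inv_mul_cancel₀ (norm_ne_zero_iff.mpr h)]

end Taylor

section ParLemmas

variable {d : ℕ}

@[simp] lemma pz_pmk (z : Vec d) (a : ℝ) : pz (pmk z a) = z := rfl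
@[simp] lemma pa_pmk (z : Vec d) (a : ℝ) : pa (pmk z a) = a := rfl
lemma pmk_sub (z z' : Vec d) (a a' : ℝ) : pmk z a - pmk z' a' = pmk (z - z') (a - a') := rfl
@[simp] lemma pz_sub (y y' : Par d) : pz (y - y') = pz y - pz y' := rfl
@[simp] lemma pa_sub (y y' : Par d) : pa (y - y') = pa y - pa y' := rfl

lemma hgrad_sub_pmk (x : Vec d) (y : Par d) (z2 : Vec d) (a2 : ℝ) (z3 : Vec d) (a3 : ℝ) :
    Hgrad x y - pmk z2 a2 - pmk z3 a3 =
      pmk (pz y - x - pa y • (‖pz y - x‖⁻¹ • (pz y - x)) - z2 - z3)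
        (pa y - ‖pz y - x‖ - a2 - a3) := rfl

lemma norm_pmk_sq (z : Vec d) (a : ℝ) : ‖pmk z a‖ ^ 2 = ‖z‖ ^ 2 + a ^ 2 := by
  have h := WithLp.prod_norm_sq_eq_of_L2 (pmk z a)
  rw [h]; simp [pmk]

lemma norm_pmk_le (z : Vec d) (a : ℝ) : ‖pmk z a‖ ≤ ‖z‖ + |a| := by
  have h := norm_pmk_sq z a
  nlinarith [norm_nonneg (pmk z a), norm_nonneg z, abs_nonneg a, sq_abs a,
    mul_nonneg (norm_nonneg z) (abs_nonneg a)]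

lemma norm_par_sq (y : Par d) : ‖y‖ ^ 2 = ‖pz y‖ ^ 2 + (pa y) ^ 2 := by
  have h := WithLp.prod_norm_sq_eq_of_L2 y
  rw [h]
  congr 1
  rw [show (WithLp.snd y : ℝ) = pa y from rfl, Real.norm_eq_abs, sq_abs]

lemma norm_pz_le (y : Par d) : ‖pz y‖ ≤ ‖y‖ := by
  have h := norm_par_sq y
  nlinarith [norm_nonneg y, norm_nonneg (pz y), sq_nonneg (pa y)]

lemma abs_pa_le (y : Par d) : |pa y| ≤ ‖y‖ := by
  have h := norm_par_sq y
  nlinarith [norm_nonneg y, abs_nonneg (pa y), sq_abs (pa y), sq_nonneg (‖pz y‖)]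

def parCLE {d : ℕ} : Par d ≃L[ℝ] (EuclideanSpace ℝ (Fin d) × ℝ) :=
  WithLp.prodContinuousLinearEquiv 2 ℝ _ _

lemma pmk_eq_symm (z : Vec d) (a : ℝ) : pmk z a = (parCLE (d := d)).symm (z, a) := rfl

lemma integrable_pmk {Ω : Type*} [MeasurableSpace Ω] {P : Measure Ω}
    {f : Ω → Vec d} {g : Ω → ℝ} (hf : Integrable f P) (hg : Integrable g P) :
    Integrable (fun ω => pmk (f ω) (g ω)) P := by
  have h : Integrable (fun ω => (f ω, g ω)) P := hf.prodMk hg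
  exact ((parCLE (d := d)).symm : (EuclideanSpace ℝ (Fin d) × ℝ) →L[ℝ] Par d).integrable_comp h

lemma integral_pmk {Ω : Type*} [MeasurableSpace Ω] {P : Measure Ω}
    {f : Ω → Vec d} {g : Ω → ℝ} (hf : Integrable f P) (hg : Integrable g P) :
    ∫ ω, pmk (f ω) (g ω) ∂P = pmk (∫ ω, f ω ∂P) (∫ ω, g ω ∂P) := by
  have h : Integrable (fun ω => (f ω, g ω)) P := hf.prodMk hg
  have := ((parCLE (d := d)).symm :
    (EuclideanSpace ℝ (Fin d) × ℝ) →L[ℝ] Par d).integral_comp_comm h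
  rw [pmk_eq_symm, ← integral_pair hf hg]
  exact this

lemma pmk_inj {z z' : Vec d} {a a' : ℝ} (hz : z = z') (ha : a = a') : pmk z a = pmk z' a' := by
  rw [hz, ha]

end ParLemmas

set_option maxHeartbeats 4000000 in
theorem statement11
    {Ω : Type*} [MeasurableSpace Ω] (P : Measure Ω) [IsProbabilityMeasure P]
    {d : ℕ} (hd : 2 ≤ d)
    (μ : Vec d) (r : ℝ) (hr : 0 < r)
    (W : Ω → ℝ) (U : Ω → Vec d)
    (hWm : Measurable W) (hUm : Measurable U)
    (hWpos : ∀ ω, 0 < W ω) (hUnorm : ∀ ω, ‖U ω‖ = 1)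
    (hindep : IndepFun W U P)
    (X : Ω → Vec d) (hX : ∀ ω, X ω = μ + (r * W ω) • U ω)
    (rstar : ℝ) (hrstar : rstar = r * ∫ ω, W ω ∂P)
    (hA1 : Integrable (fun ω => (‖X ω - μ‖ ^ 2)⁻¹) P)
    (hA2 : Integrable (fun ω => ‖X ω - μ‖ ^ 2) P)
    (Rμ Rr A : ℝ) (hRμ : 0 < Rμ) (hRr : 0 < Rr)
    (hAlb : ‖∫ ω, U ω ∂P‖ ^ 2 < A) (hAub : A < 1)
    (hA3 : ∃ L : ℝ, L < (1 - ‖∫ ω, U ω ∂P‖ ^ 2 / A) / (rstar + 3 / 2 * Rr) ∧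
      ∀ z ∈ Metric.closedBall μ Rμ, ∀ v : Vec d, ‖v‖ = 1 → GammaQF P X z v ≤ L)
    :
    ∀ K : Set (Par d), IsCompact K → Convex ℝ K → pmk μ rstar ∈ K →
      ∃ Cθ : ℝ, 0 < Cθ ∧ ∀ y ∈ K,
        ‖Phi P X y - GammaAt P X (pmk μ rstar) (y - pmk μ rstar)‖ ≤
          Cθ * ‖y - pmk μ rstar‖ ^ 2 := by
  intro K hK _hKc hθK
  -- basic pointwise facts
  have hbX : ∀ ω, X ω - μ = (r * W ω) • U ω := by
    intro ω; rw [hX ω]; abel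
  have hnX : ∀ ω, ‖X ω - μ‖ = r * W ω := by
    intro ω
    rw [hbX ω, norm_smul, Real.norm_eq_abs, abs_of_pos (mul_pos hr (hWpos ω)), hUnorm, mul_one]
  have hnpos : ∀ ω, 0 < ‖X ω - μ‖ := fun ω => by rw [hnX ω]; exact mul_pos hr (hWpos ω)
  have hXne : ∀ ω, X ω - μ ≠ 0 := fun ω => by
    intro h; have := hnpos ω; rw [h, norm_zero] at this; exact lt_irrefl _ this
  have hbne : ∀ ω, μ - X ω ≠ 0 := fun ω => by
    intro h
    apply hXne ω
    have : -(μ - X ω) = 0 := by rw [h, neg_zero]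
    rw [neg_sub] at this; exact this
  have hUeq : ∀ ω, ‖X ω - μ‖⁻¹ • (X ω - μ) = U ω := by
    intro ω
    rw [hnX ω, hbX ω, smul_smul, inv_mul_cancel₀ (ne_of_gt (mul_pos hr (hWpos ω))), one_smul]
  have hXmeas : Measurable X := by
    have : X = fun ω => μ + (r * W ω) • U ω := funext hX
    rw [this]
    exact measurable_const.add ((hWm.const_mul r).smul hUm)
  -- integrability facts
  have hnmeas : Measurable fun ω => ‖X ω - μ‖ := (hXmeas.sub measurable_const).norm
  have hI1 : Integrable (fun ω => ‖X ω - μ‖⁻¹) P := by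
    have hgint : Integrable (fun ω => 1 + (‖X ω - μ‖ ^ 2)⁻¹) P := (integrable_const 1).add hA1
    refine hgint.mono (hnmeas.inv.aestronglyMeasurable) (ae_of_all _ fun ω => ?_)
    have h0 := hnpos ω
    rw [Real.norm_eq_abs, Real.norm_eq_abs, abs_of_pos (by positivity)]
    rw [abs_of_pos (by positivity : (0:ℝ) < 1 + (‖X ω - μ‖ ^ 2)⁻¹)]
    rw [← sub_nonneg]
    have key : 1 + (‖X ω - μ‖ ^ 2)⁻¹ - ‖X ω - μ‖⁻¹ =
        (‖X ω - μ‖ ^ 2 + 1 - ‖X ω - μ‖) / ‖X ω - μ‖ ^ 2 := by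
      field_simp
    rw [key]
    apply div_nonneg _ (by positivity)
    nlinarith [sq_nonneg (‖X ω - μ‖ - 1)]
  have hIW : Integrable W P := by
    have hW2 : Integrable (fun ω => W ω ^ 2) P := by
      have : (fun ω => W ω ^ 2) = fun ω => (r ^ 2)⁻¹ * ‖X ω - μ‖ ^ 2 := by
        funext ω; rw [hnX ω]; field_simp
      rw [this]
      exact hA2.const_mul _
    have hgint : Integrable (fun ω => 1 + W ω ^ 2) P := (integrable_const 1).add hW2
    refine hgint.mono hWm.aestronglyMeasurable (ae_of_all _ fun ω => ?_)
    have h0 := hWpos ω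
    rw [Real.norm_eq_abs, Real.norm_eq_abs, abs_of_pos h0, abs_of_pos (by positivity)]
    nlinarith [sq_nonneg (W ω - 1)]
  have hIU : Integrable U P := by
    refine (integrable_const (1:ℝ)).mono hUm.aestronglyMeasurable (ae_of_all _ fun ω => ?_)
    rw [hUnorm ω]; simp
  have hIWU : Integrable (fun ω => W ω • U ω) P := by
    refine hIW.norm.mono (hWm.smul hUm).aestronglyMeasurable (ae_of_all _ fun ω => ?_)
    rw [norm_smul, hUnorm ω, mul_one, Real.norm_eq_abs, Real.norm_eq_abs, abs_abs]
  -- independence: E[W • U] = E[W] • E[U]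
  have hintWU : ∫ ω, W ω • U ω ∂P = (∫ ω, W ω ∂P) • (∫ ω, U ω ∂P) := by
    apply PiLp.ext
    intro i
    have hproji : Measurable fun v : Vec d => v i :=
      (EuclideanSpace.proj (𝕜 := ℝ) i).continuous.measurable
    have hUi : Integrable (fun ω => U ω i) P :=
      (EuclideanSpace.proj (𝕜 := ℝ) i).integrable_comp hIU
    have hIndi : IndepFun W (fun ω => U ω i) P :=
      hindep.comp measurable_id hproji
    have h1 : (∫ ω, W ω • U ω ∂P) i = ∫ ω, W ω * U ω i ∂P := by
      have := ((EuclideanSpace.proj (𝕜 := ℝ) i).integral_comp_comm hIWU).symm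
      exact this
    have h2 : (∫ ω, U ω ∂P) i = ∫ ω, U ω i ∂P := by
      have := ((EuclideanSpace.proj (𝕜 := ℝ) i).integral_comp_comm hIU).symm
      exact this
    have h3 : ((∫ ω, W ω ∂P) • (∫ ω, U ω ∂P)) i = (∫ ω, W ω ∂P) * (∫ ω, U ω ∂P) i := rfl
    rw [h1, h3, h2]
    simpa [Pi.mul_apply] using hIndi.integral_mul_eq_mul_integral hIW.1 hUi.1
  have hIrWU : Integrable (fun ω => (rstar - r * W ω) • U ω) P := by
    have h1 : Integrable (fun ω => rstar • U ω) P := hIU.smul rstar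
    have h2 : Integrable (fun ω => r • (W ω • U ω)) P := hIWU.smul r
    have h3 : (fun ω => (rstar - r * W ω) • U ω)
        = fun ω => rstar • U ω - r • (W ω • U ω) := by
      funext ω; rw [sub_smul, mul_smul]
    rw [h3]; exact h1.sub h2
  have hIrW : Integrable (fun ω => rstar - r * W ω) P :=
    (integrable_const rstar).sub (hIW.const_mul r)
  -- Phi at θ vanishes
  have hHθ : ∀ ω, Hgrad (X ω) (pmk μ rstar)
      = pmk ((rstar - r * W ω) • U ω) (rstar - r * W ω) := by
    intro ω
    unfold Hgrad
    simp only [pz_pmk, pa_pmk]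
    have e0 : μ - X ω = -(X ω - μ) := by abel
    apply pmk_inj
    · rw [e0, norm_neg, hnX ω, hbX ω, smul_neg, smul_smul,
        inv_mul_cancel₀ (ne_of_gt (mul_pos hr (hWpos ω))), one_smul]
      module
    · rw [e0, norm_neg, hnX ω]
  have hPhiθ : Phi P X (pmk μ rstar) = 0 := by
    unfold Phi
    simp only [hHθ]
    rw [integral_pmk hIrWU hIrW]
    have hB : ∫ ω, (rstar - r * W ω) ∂P = 0 := by
      rw [integral_sub (integrable_const _) (hIW.const_mul r), integral_const_mul,
        integral_const]
      simp [hrstar]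
    have hA : ∫ ω, (rstar - r * W ω) • U ω ∂P = 0 := by
      have h3 : (fun ω => (rstar - r * W ω) • U ω)
          = fun ω => rstar • U ω - r • (W ω • U ω) := by
        funext ω; rw [sub_smul, mul_smul]
      have i1 : Integrable (fun ω => rstar • U ω) P := hIU.smul rstar
      have i2 : Integrable (fun ω => r • (W ω • U ω)) P := hIWU.smul r
      rw [h3, integral_sub i1 i2, integral_smul, integral_smul,
        hintWU, hrstar, smul_smul]
      exact sub_self _
    rw [hA, hB]
    rfl
  -- compact set bound
  obtain ⟨MK, hMKsub⟩ := hK.isBounded.subset_closedBall (pmk μ rstar)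
  have hMK0 : 0 ≤ MK := by
    have h := hMKsub hθK
    rw [Metric.mem_closedBall] at h
    calc (0:ℝ) ≤ dist (pmk μ rstar) (pmk μ rstar) := dist_nonneg
      _ ≤ MK := h
  set I2 : ℝ := ∫ ω, (‖X ω - μ‖ ^ 2)⁻¹ ∂P with hI2def
  set I1 : ℝ := ∫ ω, ‖X ω - μ‖⁻¹ ∂P with hI1def
  have hI2n : 0 ≤ I2 := integral_nonneg fun ω => by positivity
  have hI1n : 0 ≤ I1 := integral_nonneg fun ω => by positivity
  refine ⟨12 * (|rstar| + MK) * I2 + 13 * I1 + 1, by positivity, ?_⟩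
  intro y hyK
  set δ : Vec d := pz y - μ with hδdef
  set α : ℝ := pa y - rstar with hαdef
  have hNsq : ‖y - pmk μ rstar‖ ^ 2 = ‖δ‖ ^ 2 + α ^ 2 := by
    rw [norm_par_sq]
    simp [hδdef, hαdef]
  have hyM : ‖y - pmk μ rstar‖ ≤ MK := by
    have h := hMKsub hyK
    rwa [Metric.mem_closedBall, dist_eq_norm] at h
  have hδle : ‖δ‖ ≤ ‖y - pmk μ rstar‖ := by
    rw [hδdef]
    have h := norm_pz_le (y - pmk μ rstar)
    simpa using h
  have hαle : |α| ≤ ‖y - pmk μ rstar‖ := by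
    rw [hαdef]
    have h := abs_pa_le (y - pmk μ rstar)
    simpa using h
  have haM : |pa y| ≤ |rstar| + MK := by
    have h : pa y = rstar + α := by rw [hαdef]; ring
    rw [h]
    calc |rstar + α| ≤ |rstar| + |α| := abs_add_le _ _
      _ ≤ |rstar| + MK := by linarith [hαle.trans hyM]
  -- the linearization integrand
  set D : Ω → Vec d := fun ω =>
    ‖X ω - μ‖⁻¹ • (δ - (⟪X ω - μ, δ⟫ / ‖X ω - μ‖ ^ 2) • (X ω - μ)) with hDdef
  have hDm : AEStronglyMeasurable D P := by
    apply Measurable.aestronglyMeasurable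
    apply Measurable.smul hnmeas.inv
    apply Measurable.sub measurable_const
    exact (((hXmeas.sub measurable_const).inner measurable_const).div
      (hnmeas.pow_const 2)).smul (hXmeas.sub measurable_const)
  have hDb : ∀ ω, ‖D ω‖ ≤ 2 * ‖δ‖ * ‖X ω - μ‖⁻¹ := by
    intro ω
    have hn0 := hnpos ω
    have hin : |⟪X ω - μ, δ⟫| ≤ ‖X ω - μ‖ * ‖δ‖ := abs_real_inner_le_norm _ _
    have h1 : ‖δ - (⟪X ω - μ, δ⟫ / ‖X ω - μ‖ ^ 2) • (X ω - μ)‖ ≤ 2 * ‖δ‖ := by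
      refine (norm_sub_le _ _).trans ?_
      rw [norm_smul, Real.norm_eq_abs, abs_div,
        abs_of_pos (by positivity : (0:ℝ) < ‖X ω - μ‖ ^ 2)]
      have h2 : |⟪X ω - μ, δ⟫| / ‖X ω - μ‖ ^ 2 * ‖X ω - μ‖ ≤ ‖δ‖ := by
        rw [div_mul_eq_mul_div, div_le_iff₀ (by positivity)]
        nlinarith [hin, norm_nonneg (X ω - μ), norm_nonneg δ]
      linarith
    simp only [hDdef]
    rw [norm_smul, Real.norm_eq_abs, abs_inv, abs_of_pos hn0]
    calc ‖X ω - μ‖⁻¹ * ‖δ - (⟪X ω - μ, δ⟫ / ‖X ω - μ‖ ^ 2) • (X ω - μ)‖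
        ≤ ‖X ω - μ‖⁻¹ * (2 * ‖δ‖) :=
          mul_le_mul_of_nonneg_left h1 (by positivity)
      _ = 2 * ‖δ‖ * ‖X ω - μ‖⁻¹ := by ring
  have hID : Integrable D P := by
    refine (hI1.const_mul (2 * ‖δ‖)).mono' hDm (ae_of_all _ fun ω => ?_)
    exact hDb ω
  have hIinner : Integrable (fun ω => ⟪U ω, δ⟫) P := by
    have h := (innerSL ℝ δ).integrable_comp hIU
    have e : (fun ω => (innerSL ℝ δ) (U ω)) = fun ω => ⟪U ω, δ⟫ := by
      funext ω
      rw [innerSL_apply_apply]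
      exact real_inner_comm _ _
    rwa [e] at h
  have hM1 : Integrable (fun ω => δ - rstar • D ω + α • U ω) P :=
    ((integrable_const δ).sub (hID.smul rstar)).add (hIU.smul α)
  have hM2 : Integrable (fun ω => ⟪U ω, δ⟫ + α) P := hIinner.add (integrable_const α)
  have hIMf : Integrable (fun ω => pmk (δ - rstar • D ω + α • U ω) (⟪U ω, δ⟫ + α)) P :=
    integrable_pmk hM1 hM2
  have hUint : ∫ ω, ‖X ω - μ‖⁻¹ • (X ω - μ) ∂P = ∫ ω, U ω ∂P :=
    integral_congr_ae (ae_of_all _ hUeq)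
  have hinnerint : ∫ ω, ⟪U ω, δ⟫ ∂P = ⟪∫ ω, U ω ∂P, δ⟫ := by
    have e : (fun ω => ⟪U ω, δ⟫) = fun ω => ⟪δ, U ω⟫ := by
      funext ω; exact real_inner_comm _ _
    rw [e, integral_inner hIU, real_inner_comm]
  have hMint : ∫ ω, pmk (δ - rstar • D ω + α • U ω) (⟪U ω, δ⟫ + α) ∂P
      = GammaAt P X (pmk μ rstar) (y - pmk μ rstar) := by
    rw [integral_pmk hM1 hM2]
    unfold GammaAt
    simp only [pz_pmk, pa_pmk, pz_sub, pa_sub]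
    rw [← hδdef, ← hαdef]
    apply pmk_inj
    · have i1 : Integrable (fun ω => δ - rstar • D ω) P :=
        (integrable_const δ).sub (hID.smul rstar)
      have i2 : Integrable (fun ω => α • U ω) P := hIU.smul α
      have i3 : Integrable (fun ω => rstar • D ω) P := hID.smul rstar
      rw [integral_add i1 i2, integral_sub (integrable_const δ) i3,
        integral_smul, integral_smul, integral_const]
      rw [hUint]
      simp only [hDdef, measure_univ, ENNReal.toReal_one, probReal_univ, one_smul]
    · rw [integral_add hIinner (integrable_const α), integral_const, hUint, hinnerint]
      simp [measure_univ]
  -- integrability of the Hgrad terms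
  have hIX : Integrable X P := by
    have e : X = fun ω => μ + r • (W ω • U ω) := by
      funext ω; rw [hX ω, mul_smul]
    rw [e]
    exact (integrable_const μ).add (hIWU.smul r)
  have hIHθ : Integrable (fun ω => Hgrad (X ω) (pmk μ rstar)) P :=
    (integrable_pmk hIrWU hIrW).congr (ae_of_all _ fun ω => (hHθ ω).symm)
  have hvm : Measurable (fun ω => pz y - X ω) := measurable_const.sub hXmeas
  have hIHy : Integrable (fun ω => Hgrad (X ω) y) P := by
    have e : (fun ω => Hgrad (X ω) y) = fun ω =>
        pmk (pz y - X ω - pa y • (‖pz y - X ω‖⁻¹ • (pz y - X ω)))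
          (pa y - ‖pz y - X ω‖) := rfl
    rw [e]
    have c1a : Integrable (fun ω => pz y - X ω) P := (integrable_const (pz y)).sub hIX
    have c1b : Integrable (fun ω => pa y • (‖pz y - X ω‖⁻¹ • (pz y - X ω))) P := by
      refine (integrable_const |pa y|).mono'
        (((hvm.norm.inv.smul hvm).const_smul (pa y)).aestronglyMeasurable)
        (ae_of_all _ fun ω => ?_)
      rw [norm_smul, Real.norm_eq_abs]
      calc |pa y| * ‖‖pz y - X ω‖⁻¹ • (pz y - X ω)‖ ≤ |pa y| * 1 :=
            mul_le_mul_of_nonneg_left (norm_normalize_le_one _) (abs_nonneg _)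
        _ = |pa y| := mul_one _
    have c2b : Integrable (fun ω => ‖pz y - X ω‖) P := by
      refine ((integrable_const (‖pz y - μ‖)).add (hIW.const_mul r)).mono'
        hvm.norm.aestronglyMeasurable (ae_of_all _ fun ω => ?_)
      rw [Real.norm_eq_abs, abs_of_nonneg (norm_nonneg _)]
      calc ‖pz y - X ω‖ = ‖(pz y - μ) - (X ω - μ)‖ := by congr 1; abel
        _ ≤ ‖pz y - μ‖ + ‖X ω - μ‖ := norm_sub_le _ _
        _ = ‖pz y - μ‖ + r * W ω := by rw [hnX ω]
    exact integrable_pmk (c1a.sub c1b) ((integrable_const (pa y)).sub c2b)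
  -- the key identity
  have hticks : ∫ ω, Hgrad (X ω) (pmk μ rstar) ∂P = 0 := hPhiθ
  have hkey : Phi P X y - GammaAt P X (pmk μ rstar) (y - pmk μ rstar)
      = ∫ ω, (Hgrad (X ω) y - Hgrad (X ω) (pmk μ rstar)
          - pmk (δ - rstar • D ω + α • U ω) (⟪U ω, δ⟫ + α)) ∂P := by
    have hsub1 : Integrable (fun ω => Hgrad (X ω) y - Hgrad (X ω) (pmk μ rstar)) P :=
      hIHy.sub hIHθ
    rw [integral_sub hsub1 hIMf, integral_sub hIHy hIHθ, hticks, sub_zero, ← hMint]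
    rfl
  -- pointwise bound
  have hptw : ∀ ω, ‖Hgrad (X ω) y - Hgrad (X ω) (pmk μ rstar)
      - pmk (δ - rstar • D ω + α • U ω) (⟪U ω, δ⟫ + α)‖
      ≤ (|rstar| + MK) * (12 * ‖δ‖ ^ 2 * (‖X ω - μ‖ ^ 2)⁻¹)
        + |α| * (2 * ‖δ‖ * ‖X ω - μ‖⁻¹) + 12 * ‖δ‖ ^ 2 * ‖X ω - μ‖⁻¹ := by
    intro ω
    set b : Vec d := μ - X ω with hbdef
    have hbne' : b ≠ 0 := hbne ω
    have hnb0 : 0 < ‖b‖ := norm_pos_iff.mpr hbne'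
    have hXb : X ω - μ = -b := by rw [hbdef]; abel
    have hnb : ‖b‖ = ‖X ω - μ‖ := by rw [hXb, norm_neg]
    have hby : pz y - X ω = b + δ := by rw [hbdef, hδdef]; abel
    have hUb : U ω = -(‖b‖⁻¹ • b) := by
      rw [← hUeq ω, hXb, norm_neg, smul_neg]
    have hDeq : D ω = ‖b‖⁻¹ • δ - (⟪b, δ⟫ / ‖b‖ ^ 3) • b := by
      simp only [hDdef]
      have hs : ‖b‖⁻¹ * (⟪b, δ⟫ / ‖b‖ ^ 2) = ⟪b, δ⟫ / ‖b‖ ^ 3 := by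
        have hbne0 : ‖b‖ ≠ 0 := ne_of_gt hnb0
        field_simp
        try ring
        try exact Or.inl trivial
      rw [hXb, norm_neg, inner_neg_left, neg_div, neg_smul, smul_neg, neg_neg,
        smul_sub, smul_smul, hs]
    have hsplit : Hgrad (X ω) y - Hgrad (X ω) (pmk μ rstar)
        - pmk (δ - rstar • D ω + α • U ω) (⟪U ω, δ⟫ + α)
        = pmk ((pz y - X ω - pa y • (‖pz y - X ω‖⁻¹ • (pz y - X ω)))
            - (μ - X ω - rstar • (‖μ - X ω‖⁻¹ • (μ - X ω)))
            - (δ - rstar • D ω + α • U ω))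
          ((pa y - ‖pz y - X ω‖) - (rstar - ‖μ - X ω‖) - (⟪U ω, δ⟫ + α)) := rfl
    rw [hsplit]
    refine (norm_pmk_le _ _).trans ?_
    have hC1 : (pz y - X ω - pa y • (‖pz y - X ω‖⁻¹ • (pz y - X ω)))
        - (μ - X ω - rstar • (‖μ - X ω‖⁻¹ • (μ - X ω)))
        - (δ - rstar • D ω + α • U ω)
        = (-(pa y)) • (‖b + δ‖⁻¹ • (b + δ) - ‖b‖⁻¹ • b
            - (‖b‖⁻¹ • δ - (⟪b, δ⟫ / ‖b‖ ^ 3) • b))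
          + (-α) • (‖b‖⁻¹ • δ - (⟪b, δ⟫ / ‖b‖ ^ 3) • b) := by
      rw [hby, hDeq, hUb, ← hbdef, hαdef]
      module
    have hC2 : (pa y - ‖pz y - X ω‖) - (rstar - ‖μ - X ω‖) - (⟪U ω, δ⟫ + α)
        = -(‖b + δ‖ - ‖b‖ - ⟪b, δ⟫ / ‖b‖) := by
      rw [hby, hUb, ← hbdef, hαdef, inner_neg_left, real_inner_smul_left]
      field_simp
      ring
    rw [hC1, hC2]
    have hb1 := taylor2 b δ hbne'
    have hb2 := dlin_bound b δ hbne'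
    have hc2 := taylor1 b δ hbne'
    have hn1 : ‖(-(pa y)) • (‖b + δ‖⁻¹ • (b + δ) - ‖b‖⁻¹ • b
          - (‖b‖⁻¹ • δ - (⟪b, δ⟫ / ‖b‖ ^ 3) • b))
        + (-α) • (‖b‖⁻¹ • δ - (⟪b, δ⟫ / ‖b‖ ^ 3) • b)‖
        ≤ |pa y| * (12 * ‖δ‖ ^ 2 / ‖b‖ ^ 2) + |α| * (2 * ‖δ‖ / ‖b‖) := by
      refine (norm_add_le _ _).trans ?_
      rw [norm_smul, norm_smul, Real.norm_eq_abs, Real.norm_eq_abs, abs_neg, abs_neg]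
      exact add_le_add (mul_le_mul_of_nonneg_left hb1 (abs_nonneg _))
        (mul_le_mul_of_nonneg_left hb2 (abs_nonneg _))
    have hn2 : |(-(‖b + δ‖ - ‖b‖ - ⟪b, δ⟫ / ‖b‖))| ≤ 12 * ‖δ‖ ^ 2 / ‖b‖ := by
      rw [abs_neg]; exact hc2
    refine (add_le_add hn1 hn2).trans ?_
    rw [hnb]
    have h0 : 0 < ‖X ω - μ‖ := hnpos ω
    have hstep : |pa y| * (12 * ‖δ‖ ^ 2 / ‖X ω - μ‖ ^ 2)
        ≤ (|rstar| + MK) * (12 * ‖δ‖ ^ 2 / ‖X ω - μ‖ ^ 2) :=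
      mul_le_mul_of_nonneg_right haM (by positivity)
    have hrw1 : (|rstar| + MK) * (12 * ‖δ‖ ^ 2 / ‖X ω - μ‖ ^ 2)
        = (|rstar| + MK) * (12 * ‖δ‖ ^ 2 * (‖X ω - μ‖ ^ 2)⁻¹) := by ring
    have hrw2 : |α| * (2 * ‖δ‖ / ‖X ω - μ‖) = |α| * (2 * ‖δ‖ * ‖X ω - μ‖⁻¹) := by ring
    have hrw3 : 12 * ‖δ‖ ^ 2 / ‖X ω - μ‖ = 12 * ‖δ‖ ^ 2 * ‖X ω - μ‖⁻¹ := by ring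
    linarith [hstep, hrw1, hrw2, hrw3]
  -- conclusion
  rw [hkey]
  have hg : Integrable (fun ω =>
      (|rstar| + MK) * (12 * ‖δ‖ ^ 2 * (‖X ω - μ‖ ^ 2)⁻¹)
        + |α| * (2 * ‖δ‖ * ‖X ω - μ‖⁻¹) + 12 * ‖δ‖ ^ 2 * ‖X ω - μ‖⁻¹) P := by
    have t1 : Integrable (fun ω => (|rstar| + MK) * (12 * ‖δ‖ ^ 2 * (‖X ω - μ‖ ^ 2)⁻¹)) P :=
      (hA1.const_mul (12 * ‖δ‖ ^ 2)).const_mul (|rstar| + MK)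
    have t2 : Integrable (fun ω => |α| * (2 * ‖δ‖ * ‖X ω - μ‖⁻¹)) P :=
      (hI1.const_mul (2 * ‖δ‖)).const_mul |α|
    have t3 : Integrable (fun ω => 12 * ‖δ‖ ^ 2 * ‖X ω - μ‖⁻¹) P :=
      hI1.const_mul (12 * ‖δ‖ ^ 2)
    exact (t1.add t2).add t3
  refine le_trans (norm_integral_le_of_norm_le hg (ae_of_all _ hptw)) ?_
  have t1 : Integrable (fun ω => (|rstar| + MK) * (12 * ‖δ‖ ^ 2 * (‖X ω - μ‖ ^ 2)⁻¹)) P :=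
    (hA1.const_mul (12 * ‖δ‖ ^ 2)).const_mul (|rstar| + MK)
  have t2 : Integrable (fun ω => |α| * (2 * ‖δ‖ * ‖X ω - μ‖⁻¹)) P :=
    (hI1.const_mul (2 * ‖δ‖)).const_mul |α|
  have t3 : Integrable (fun ω => 12 * ‖δ‖ ^ 2 * ‖X ω - μ‖⁻¹) P :=
    hI1.const_mul (12 * ‖δ‖ ^ 2)
  have hIg : ∫ ω, ((|rstar| + MK) * (12 * ‖δ‖ ^ 2 * (‖X ω - μ‖ ^ 2)⁻¹)
      + |α| * (2 * ‖δ‖ * ‖X ω - μ‖⁻¹) + 12 * ‖δ‖ ^ 2 * ‖X ω - μ‖⁻¹) ∂P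
      = (|rstar| + MK) * (12 * ‖δ‖ ^ 2 * I2) + |α| * (2 * ‖δ‖ * I1)
        + 12 * ‖δ‖ ^ 2 * I1 := by
    have t12 : Integrable (fun ω => (|rstar| + MK) * (12 * ‖δ‖ ^ 2 * (‖X ω - μ‖ ^ 2)⁻¹)
        + |α| * (2 * ‖δ‖ * ‖X ω - μ‖⁻¹)) P := t1.add t2
    rw [integral_add t12 t3, integral_add t1 t2, integral_const_mul,
      integral_const_mul, integral_const_mul, integral_const_mul, integral_const_mul,
      ← hI2def, ← hI1def]
  rw [hIg]
  set N := ‖y - pmk μ rstar‖ with hNdef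
  have hN0 : 0 ≤ N := norm_nonneg _
  have h1 : ‖δ‖ ^ 2 ≤ N ^ 2 := by nlinarith [hNsq, sq_nonneg α]
  have h2 : 2 * |α| * ‖δ‖ ≤ N ^ 2 := by
    nlinarith [hNsq, sq_abs α, sq_nonneg (|α| - ‖δ‖)]
  have e1 : (|rstar| + MK) * (12 * ‖δ‖ ^ 2 * I2) ≤ (|rstar| + MK) * (12 * N ^ 2 * I2) := by
    apply mul_le_mul_of_nonneg_left _ (by positivity)
    apply mul_le_mul_of_nonneg_right _ hI2n
    linarith
  have e2 : |α| * (2 * ‖δ‖ * I1) ≤ N ^ 2 * I1 := by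
    nlinarith [mul_le_mul_of_nonneg_right h2 hI1n]
  have e3 : 12 * ‖δ‖ ^ 2 * I1 ≤ 12 * N ^ 2 * I1 := by
    apply mul_le_mul_of_nonneg_right _ hI1n
    linarith
  nlinarith [e1, e2, e3, sq_nonneg N]

end
end

section
/- Let k ≥ 1 be an integer and suppose E[W^{2k}] < ∞. Then for every y = (z,a) ∈ ℝ^d × ℝ, E[‖H(X,y)‖^{2k}] ≤ 4^{3k−1}·(2^k·‖y − θ‖^{2k} + 2^k·(r*)^{2k} + r^{2k}·E[W^{2k}] + r^{2k}·(E[W²])^k). -/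
open MeasureTheory ProbabilityTheory Filter
open scoped ENNReal NNReal RealInnerProductSpace Topology

noncomputable section

set_option maxHeartbeats 1000000

theorem statement14
    {Ω : Type*} [MeasurableSpace Ω] (P : Measure Ω) [IsProbabilityMeasure P]
    {d : ℕ} (hd : 2 ≤ d)
    (μ : Vec d) (r : ℝ) (hr : 0 < r)
    (W : Ω → ℝ) (U : Ω → Vec d)
    (hWm : Measurable W) (hUm : Measurable U)
    (hWpos : ∀ ω, 0 < W ω) (hUnorm : ∀ ω, ‖U ω‖ = 1)
    (hindep : IndepFun W U P)
    (X : Ω → Vec d) (hX : ∀ ω, X ω = μ + (r * W ω) • U ω)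
    (rstar : ℝ) (hrstar : rstar = r * ∫ ω, W ω ∂P)
    (k : ℕ) (hk : 1 ≤ k)
    (hWk : Integrable (fun ω => W ω ^ (2 * k)) P)
    :
    ∀ y : Par d,
      ∫⁻ ω, ENNReal.ofReal (‖Hgrad (X ω) y‖ ^ (2 * k)) ∂P ≤
        ENNReal.ofReal ((4 : ℝ) ^ (3 * k - 1) *
          (2 ^ k * ‖y - pmk μ rstar‖ ^ (2 * k) + 2 ^ k * rstar ^ (2 * k) +
            r ^ (2 * k) * ∫ ω, W ω ^ (2 * k) ∂P +
            r ^ (2 * k) * (∫ ω, W ω ^ 2 ∂P) ^ k)) := by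
  intro y
  set θ : Par d := pmk μ rstar with hθ
  have hrs0 : 0 ≤ rstar := by
    rw [hrstar]
    exact mul_nonneg hr.le (integral_nonneg fun ω => (hWpos ω).le)
  set z : Vec d := pz y with hzdef
  set a : ℝ := pa y with hadef
  have hfst : (y - θ).fst = z - μ := by rw [WithLp.sub_fst]; rfl
  have hsnd : (y - θ).snd = a - rstar := by rw [WithLp.sub_snd]; rfl
  have hnsq : ‖y - θ‖ ^ 2 = ‖z - μ‖ ^ 2 + (a - rstar) ^ 2 := by
    rw [WithLp.prod_norm_sq_eq_of_L2, hfst, hsnd, Real.norm_eq_abs, sq_abs]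
  have h1 : ‖z - μ‖ ≤ ‖y - θ‖ :=
    le_of_pow_le_pow_left₀ two_ne_zero (norm_nonneg _) (by nlinarith [sq_nonneg (a - rstar)])
  have h2 : |a - rstar| ≤ ‖y - θ‖ :=
    le_of_pow_le_pow_left₀ two_ne_zero (norm_nonneg _)
      (by rw [sq_abs]; nlinarith [sq_nonneg (‖z - μ‖)])
  set N : ℝ := ‖y - θ‖ ^ (2 * k) with hNdef
  set R : ℝ := rstar ^ (2 * k) with hRdef
  have hN0 : 0 ≤ N := pow_nonneg (norm_nonneg _) _
  have hR0 : 0 ≤ R := pow_nonneg hrs0 _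
  have hrn0 : 0 ≤ r ^ (2 * k) := pow_nonneg hr.le _
  set C1 : ℝ := 2 ^ k * 4 ^ (2 * k - 1) * (2 * N + R) with hC1def
  set C2 : ℝ := 2 ^ k * 4 ^ (2 * k - 1) * r ^ (2 * k) with hC2def
  have hC1 : 0 ≤ C1 := by positivity
  have hC2 : 0 ≤ C2 := by positivity
  -- pointwise bound
  have hpt : ∀ ω, ‖Hgrad (X ω) y‖ ^ (2 * k) ≤ C1 + C2 * W ω ^ (2 * k) := by
    intro ω
    set v : Vec d := z - X ω with hvdef
    have hHfst : (Hgrad (X ω) y).fst = v - a • (‖v‖⁻¹ • v) := rfl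
    have hHsnd : (Hgrad (X ω) y).snd = a - ‖v‖ := rfl
    have hfstle : ‖(Hgrad (X ω) y).fst‖ ≤ |a - ‖v‖| := by
      rw [hHfst, smul_smul]
      have hrw : v - (a * ‖v‖⁻¹) • v = (1 - a * ‖v‖⁻¹) • v := by
        rw [sub_smul, one_smul]
      rw [hrw, norm_smul, Real.norm_eq_abs]
      rcases eq_or_ne (‖v‖) 0 with hv | hv
      · rw [hv, mul_zero]; exact abs_nonneg _
      · have hmul : (1 - a * ‖v‖⁻¹) * ‖v‖ = ‖v‖ - a := by field_simp
        have heq : |1 - a * ‖v‖⁻¹| * |‖v‖| = |a - ‖v‖| := by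
          rw [← abs_mul, hmul, abs_sub_comm]
        rw [abs_of_nonneg (norm_nonneg v)] at heq
        exact heq.le
    have hsq : ‖Hgrad (X ω) y‖ ^ 2 ≤ 2 * (a - ‖v‖) ^ 2 := by
      rw [WithLp.prod_norm_sq_eq_of_L2, hHsnd, Real.norm_eq_abs, sq_abs]
      have h5 := pow_le_pow_left₀ (norm_nonneg (Hgrad (X ω) y).fst) hfstle 2
      rw [sq_abs] at h5
      linarith
    have hWnn : 0 ≤ r * W ω := mul_nonneg hr.le (hWpos ω).le
    have hvle : ‖v‖ ≤ ‖z - μ‖ + r * W ω := by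
      have hXμ : ‖μ - X ω‖ = r * W ω := by
        rw [hX ω]
        have h6 : μ - (μ + (r * W ω) • U ω) = -((r * W ω) • U ω) := by abel
        rw [h6, norm_neg, norm_smul, hUnorm ω, mul_one, Real.norm_eq_abs,
          abs_of_nonneg hWnn]
      have h7 : (z - μ) + (μ - X ω) = v := sub_add_sub_cancel _ _ _
      calc ‖v‖ = ‖(z - μ) + (μ - X ω)‖ := by rw [h7]
        _ ≤ ‖z - μ‖ + ‖μ - X ω‖ := norm_add_le _ _
        _ = ‖z - μ‖ + r * W ω := by rw [hXμ]
    have habs : |a - ‖v‖| ≤ (|a - rstar| + rstar) + (‖z - μ‖ + r * W ω) := by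
      have h3 : |a| ≤ |a - rstar| + rstar := by
        calc |a| = |(a - rstar) + rstar| := by rw [show (a - rstar) + rstar = a by ring]
          _ ≤ |a - rstar| + |rstar| := abs_add_le _ _
          _ = |a - rstar| + rstar := by rw [abs_of_nonneg hrs0]
      have h4 : |a - ‖v‖| ≤ |a| + ‖v‖ := by
        calc |a - ‖v‖| = |a + -‖v‖| := by rw [show a + -‖v‖ = a - ‖v‖ by ring]
          _ ≤ |a| + |-‖v‖| := abs_add_le _ _
          _ = |a| + ‖v‖ := by rw [abs_neg, abs_of_nonneg (norm_nonneg v)]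
      linarith
    have x1 : (0:ℝ) ≤ |a - rstar| + rstar := add_nonneg (abs_nonneg _) hrs0
    have x2 : (0:ℝ) ≤ ‖z - μ‖ + r * W ω := add_nonneg (norm_nonneg _) hWnn
    have hs : |a - ‖v‖| ^ (2 * k) ≤
        4 ^ (2 * k - 1) * (|a - rstar| ^ (2 * k) + rstar ^ (2 * k)
          + ‖z - μ‖ ^ (2 * k) + (r * W ω) ^ (2 * k)) := by
      have h44 : (4:ℝ) ^ (2 * k - 1) = 2 ^ (2 * k - 1) * 2 ^ (2 * k - 1) := by
        rw [← mul_pow]; norm_num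
      calc |a - ‖v‖| ^ (2 * k)
          ≤ ((|a - rstar| + rstar) + (‖z - μ‖ + r * W ω)) ^ (2 * k) :=
            pow_le_pow_left₀ (abs_nonneg _) habs _
        _ ≤ 2 ^ (2 * k - 1) * ((|a - rstar| + rstar) ^ (2 * k)
              + (‖z - μ‖ + r * W ω) ^ (2 * k)) := add_pow_le x1 x2 _
        _ ≤ 2 ^ (2 * k - 1) * ((2 ^ (2 * k - 1) * (|a - rstar| ^ (2 * k) + rstar ^ (2 * k)))
              + (2 ^ (2 * k - 1) * (‖z - μ‖ ^ (2 * k) + (r * W ω) ^ (2 * k)))) := by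
            refine mul_le_mul_of_nonneg_left (add_le_add ?_ ?_) (by positivity)
            · exact add_pow_le (abs_nonneg _) hrs0 _
            · exact add_pow_le (norm_nonneg _) hWnn _
        _ = 4 ^ (2 * k - 1) * (|a - rstar| ^ (2 * k) + rstar ^ (2 * k)
              + ‖z - μ‖ ^ (2 * k) + (r * W ω) ^ (2 * k)) := by rw [h44]; ring
    have hsum : |a - rstar| ^ (2 * k) + rstar ^ (2 * k) + ‖z - μ‖ ^ (2 * k)
        + (r * W ω) ^ (2 * k) ≤ 2 * N + R + r ^ (2 * k) * W ω ^ (2 * k) := by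
      have e1 : |a - rstar| ^ (2 * k) ≤ N := pow_le_pow_left₀ (abs_nonneg _) h2 _
      have e2 : ‖z - μ‖ ^ (2 * k) ≤ N := pow_le_pow_left₀ (norm_nonneg _) h1 _
      have e3 : (r * W ω) ^ (2 * k) = r ^ (2 * k) * W ω ^ (2 * k) := mul_pow _ _ _
      linarith
    have hfinal : ‖Hgrad (X ω) y‖ ^ (2 * k) ≤ 2 ^ k * |a - ‖v‖| ^ (2 * k) := by
      rw [pow_mul, pow_mul, ← mul_pow]
      refine pow_le_pow_left₀ (sq_nonneg _) ?_ k
      rw [sq_abs]; exact hsq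
    calc ‖Hgrad (X ω) y‖ ^ (2 * k) ≤ 2 ^ k * |a - ‖v‖| ^ (2 * k) := hfinal
      _ ≤ 2 ^ k * (4 ^ (2 * k - 1) * (|a - rstar| ^ (2 * k) + rstar ^ (2 * k)
            + ‖z - μ‖ ^ (2 * k) + (r * W ω) ^ (2 * k))) :=
          mul_le_mul_of_nonneg_left hs (by positivity)
      _ ≤ 2 ^ k * (4 ^ (2 * k - 1) * (2 * N + R + r ^ (2 * k) * W ω ^ (2 * k))) :=
          mul_le_mul_of_nonneg_left (mul_le_mul_of_nonneg_left hsum (by positivity))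
            (by positivity)
      _ = C1 + C2 * W ω ^ (2 * k) := by rw [hC1def, hC2def]; ring
  -- integration
  have hWnn' : ∀ ω, (0:ℝ) ≤ W ω ^ (2 * k) := fun ω => pow_nonneg (hWpos ω).le _
  have hI0 : 0 ≤ ∫ ω, W ω ^ (2 * k) ∂P := integral_nonneg hWnn'
  have hJ0 : 0 ≤ (∫ ω, W ω ^ 2 ∂P) ^ k :=
    pow_nonneg (integral_nonneg fun ω => sq_nonneg _) _
  have hmeas : Measurable fun ω => ENNReal.ofReal (W ω ^ (2 * k)) :=
    (hWm.pow_const _).ennreal_ofReal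
  have key : ∫⁻ ω, ENNReal.ofReal (‖Hgrad (X ω) y‖ ^ (2 * k)) ∂P ≤
      ENNReal.ofReal (C1 + C2 * ∫ ω, W ω ^ (2 * k) ∂P) := by
    calc ∫⁻ ω, ENNReal.ofReal (‖Hgrad (X ω) y‖ ^ (2 * k)) ∂P
        ≤ ∫⁻ ω, ENNReal.ofReal (C1 + C2 * W ω ^ (2 * k)) ∂P :=
          lintegral_mono fun ω => ENNReal.ofReal_le_ofReal (hpt ω)
      _ = ∫⁻ ω, (ENNReal.ofReal C1 + ENNReal.ofReal C2 * ENNReal.ofReal (W ω ^ (2 * k))) ∂P := by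
          refine lintegral_congr fun ω => ?_
          rw [ENNReal.ofReal_add hC1 (mul_nonneg hC2 (hWnn' ω)), ENNReal.ofReal_mul hC2]
      _ = ENNReal.ofReal C1 + ENNReal.ofReal C2 * ∫⁻ ω, ENNReal.ofReal (W ω ^ (2 * k)) ∂P := by
          rw [lintegral_add_left measurable_const, lintegral_const_mul _ hmeas,
            lintegral_const, measure_univ, mul_one]
      _ = ENNReal.ofReal C1 + ENNReal.ofReal C2 * ENNReal.ofReal (∫ ω, W ω ^ (2 * k) ∂P) := by
          rw [← MeasureTheory.ofReal_integral_eq_lintegral_ofReal hWk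
            (Filter.Eventually.of_forall hWnn')]
      _ = ENNReal.ofReal (C1 + C2 * ∫ ω, W ω ^ (2 * k) ∂P) := by
          rw [← ENNReal.ofReal_mul hC2, ← ENNReal.ofReal_add hC1 (mul_nonneg hC2 hI0)]
  refine key.trans (ENNReal.ofReal_le_ofReal ?_)
  -- final real arithmetic
  have e1 : (4:ℝ) ^ (3 * k - 1) = 4 ^ (2 * k - 1) * 4 ^ k := by
    rw [← pow_add]; congr 1; omega
  have h2Q : (2:ℝ) ≤ 4 ^ k := by
    calc (2:ℝ) ≤ 4 ^ 1 := by norm_num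
      _ ≤ 4 ^ k := pow_le_pow_right₀ (by norm_num) hk
  have hBQ : (2:ℝ) ^ k ≤ 4 ^ k := pow_le_pow_left₀ (by norm_num) (by norm_num) k
  rw [e1, hC1def, hC2def]
  have d1 : 0 ≤ 4 ^ (2 * k - 1) * (2 ^ k * N) * (4 ^ k - 2) :=
    mul_nonneg (by positivity) (by linarith)
  have d2 : 0 ≤ 4 ^ (2 * k - 1) * (2 ^ k * R) * (4 ^ k - 1) :=
    mul_nonneg (by positivity) (by linarith)
  have d3 : 0 ≤ 4 ^ (2 * k - 1) * (r ^ (2 * k) * ∫ ω, W ω ^ (2 * k) ∂P)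
      * (4 ^ k - 2 ^ k) :=
    mul_nonneg (mul_nonneg (by positivity) (mul_nonneg hrn0 hI0)) (by linarith)
  have d4 : 0 ≤ 4 ^ (2 * k - 1) * 4 ^ k * (r ^ (2 * k) * (∫ ω, W ω ^ 2 ∂P) ^ k) :=
    mul_nonneg (by positivity) (mul_nonneg hrn0 hJ0)
  nlinarith [d1, d2, d3, d4]

end
end

section
/- Suppose d ≥ 3. Then for every ε > 0 there exists a positive constant k such that for all z ∈ ℝ^d with ‖z − μ‖ ≥ ε and all t ≥ 2/ε, P[‖X − z‖ ≤ 1/t] ≤ k / t^{d−1}. -/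
open MeasureTheory ProbabilityTheory Filter
open scoped ENNReal NNReal RealInnerProductSpace Topology

noncomputable section

section Helpers
open Set Module

private lemma sq_le_imp' {a b : ℝ} (ha : 0 ≤ a) (hb : 0 ≤ b) (h : a ^ 2 ≤ b ^ 2) : a ≤ b := by
  nlinarith

set_option maxHeartbeats 1000000 in
private lemma lipschitz_lift {d : ℕ} {c : Vec d} (hc : ‖c‖ = 1) :
    LipschitzOnWith 2 (fun w : Vec d => w + Real.sqrt (1 - ‖w‖ ^ 2) • c)
      {w : Vec d | ‖w‖ ^ 2 ≤ 7/16} := by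
  apply LipschitzOnWith.of_dist_le_mul
  intro x hx y hy
  simp only [mem_setOf_eq] at hx hy
  have ha0 : (0:ℝ) ≤ ‖x‖ := norm_nonneg _
  have hb0 : (0:ℝ) ≤ ‖y‖ := norm_nonneg _
  have ha34 : ‖x‖ ≤ 3/4 := by nlinarith
  have hb34 : ‖y‖ ≤ 3/4 := by nlinarith
  set sa := Real.sqrt (1 - ‖x‖ ^ 2) with hsa_def
  set sb := Real.sqrt (1 - ‖y‖ ^ 2) with hsb_def
  have hsa2 : sa ^ 2 = 1 - ‖x‖ ^ 2 := Real.sq_sqrt (by nlinarith)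
  have hsb2 : sb ^ 2 = 1 - ‖y‖ ^ 2 := Real.sq_sqrt (by nlinarith)
  have hsa0 : 0 ≤ sa := Real.sqrt_nonneg _
  have hsb0 : 0 ≤ sb := Real.sqrt_nonneg _
  have hsa34 : 3/4 ≤ sa := by nlinarith
  have hsb34 : 3/4 ≤ sb := by nlinarith
  have h2 : (sa - sb) * (sa + sb) = (‖y‖ - ‖x‖) * (‖y‖ + ‖x‖) := by
    linear_combination hsa2 - hsb2
  have h3 : ((sa - sb) * (sa + sb)) ^ 2 = ((‖y‖ - ‖x‖) * (‖y‖ + ‖x‖)) ^ 2 := by rw [h2]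
  have h4 : (9:ℝ)/4 ≤ (sa + sb) ^ 2 := by nlinarith
  have h5 : (‖x‖ + ‖y‖) ^ 2 ≤ (9:ℝ)/4 := by nlinarith
  have hD2 : (sa - sb) ^ 2 ≤ (‖x‖ - ‖y‖) ^ 2 := by
    nlinarith [sq_nonneg (sa - sb), sq_nonneg (‖x‖ - ‖y‖)]
  have habs : |sa - sb| ≤ ‖x - y‖ := by
    have h6 : |‖x‖ - ‖y‖| ≤ ‖x - y‖ := abs_norm_sub_norm_le x y
    have h7 : |sa - sb| ≤ |‖x‖ - ‖y‖| := by
      refine sq_le_imp' (abs_nonneg _) (abs_nonneg _) ?_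
      rw [sq_abs, sq_abs]; exact hD2
    linarith
  have hfxy : (x + sa • c) - (y + sb • c) = (x - y) + (sa - sb) • c := by
    rw [sub_smul]; abel
  rw [dist_eq_norm, dist_eq_norm]
  rw [hfxy]
  calc ‖(x - y) + (sa - sb) • c‖ ≤ ‖x - y‖ + ‖(sa - sb) • c‖ := norm_add_le _ _
    _ = ‖x - y‖ + |sa - sb| := by rw [norm_smul, hc, Real.norm_eq_abs, mul_one]
    _ ≤ ‖x - y‖ + ‖x - y‖ := by linarith
    _ = (2 : ℝ≥0) * ‖x - y‖ := by push_cast; ring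

set_option maxHeartbeats 1000000 in
private lemma cap_bound_s16 {d : ℕ} (hd : 3 ≤ d) {c : Vec d} (hc : ‖c‖ = 1) {δ : ℝ} (hδ0 : 0 ≤ δ)
    (hδ : δ ^ 2 ≤ 1 / 2) :
    μH[(d : ℝ) - 1] ({u : Vec d | ‖u‖ = 1} ∩ Metric.closedBall c δ) ≤
      ENNReal.ofReal ((4 * ((d : ℝ) - 1) * δ) ^ (d - 1)) := by
  have hd1 : 1 ≤ d := by omega
  set m : ℕ := d - 1 with hm
  have hm2 : 2 ≤ m := by omega
  have hmd : (d : ℝ) - 1 = (m : ℝ) := by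
    rw [hm, Nat.cast_sub hd1, Nat.cast_one]
  rw [hmd]
  have hmpos : (0 : ℝ) ≤ (m : ℝ) := Nat.cast_nonneg m
  set cap : Set (Vec d) := {u : Vec d | ‖u‖ = 1} ∩ Metric.closedBall c δ with hcap
  set g : Vec d → Vec d := fun u => u - ⟪u, c⟫ • c with hg
  set f : Vec d → Vec d := fun w => w + Real.sqrt (1 - ‖w‖ ^ 2) • c with hf
  have hcc : ⟪c, c⟫ = 1 := by
    rw [real_inner_self_eq_norm_sq, hc]; norm_num
  -- basic facts about cap members
  have capfacts : ∀ u ∈ cap, 3/4 ≤ ⟪u, c⟫ ∧ ⟪u, c⟫ ≤ 1 ∧ ‖g u‖ ^ 2 = 1 - ⟪u, c⟫ ^ 2 := by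
    rintro u ⟨hu1, hu2⟩
    simp only [mem_setOf_eq] at hu1
    rw [Metric.mem_closedBall, dist_eq_norm] at hu2
    have huc : ‖u - c‖ ^ 2 = 2 - 2 * ⟪u, c⟫ := by
      rw [norm_sub_sq_real, hu1, hc]; ring
    have huc2 : ‖u - c‖ ^ 2 ≤ δ ^ 2 := by
      have := norm_nonneg (u - c); nlinarith
    have hp34 : 3/4 ≤ ⟪u, c⟫ := by nlinarith
    have hple : ⟪u, c⟫ ≤ 1 := by
      have := real_inner_le_norm u c; rw [hu1, hc] at this; linarith
    refine ⟨hp34, hple, ?_⟩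
    have h9 : ‖g u‖ ^ 2 = ‖u‖ ^ 2 - 2 * ⟪u, ⟪u, c⟫ • c⟫ + ‖⟪u, c⟫ • c‖ ^ 2 := by
      rw [hg]; exact norm_sub_sq_real u _
    rw [h9, real_inner_smul_right, norm_smul, hu1, hc, Real.norm_eq_abs, mul_one, sq_abs]
    ring
  -- cap ⊆ f '' (g '' cap)
  have hA : cap ⊆ f '' (g '' cap) := by
    intro u hu
    obtain ⟨hp34, hple, hgsq⟩ := capfacts u hu
    refine ⟨g u, ⟨u, hu, rfl⟩, ?_⟩
    have h1 : 1 - ‖g u‖ ^ 2 = ⟪u, c⟫ ^ 2 := by linarith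
    rw [hf]
    simp only
    rw [h1, Real.sqrt_sq (by linarith), hg]
    simp only
    abel
  -- g '' cap ⊆ small ball
  have hGsub : g '' cap ⊆ {w : Vec d | ‖w‖ ^ 2 ≤ 7/16} := by
    rintro w ⟨u, hu, rfl⟩
    obtain ⟨hp34, hple, hgsq⟩ := capfacts u hu
    simp only [mem_setOf_eq]
    nlinarith
  have hGδ : ∀ w ∈ g '' cap, ‖w‖ ≤ δ := by
    rintro w ⟨u, hu, rfl⟩
    obtain ⟨hp34, hple, hgsq⟩ := capfacts u hu
    obtain ⟨hu1', hu2'⟩ := hu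
    simp only [mem_setOf_eq] at hu1'
    rw [Metric.mem_closedBall, dist_eq_norm] at hu2'
    have huc : ‖u - c‖ ^ 2 = 2 - 2 * ⟪u, c⟫ := by
      rw [norm_sub_sq_real, hu1', hc]; ring
    have huc2 : ‖u - c‖ ^ 2 ≤ δ ^ 2 := by
      have := norm_nonneg (u - c); nlinarith
    refine sq_le_imp' (norm_nonneg _) hδ0 ?_
    nlinarith
  have hLip : LipschitzOnWith 2 f {w : Vec d | ‖w‖ ^ 2 ≤ 7/16} := lipschitz_lift hc
  -- orthogonal complement isometry
  haveI : Fact (finrank ℝ (Vec d) = m + 1) := ⟨by rw [finrank_euclideanSpace_fin]; omega⟩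
  have hc0 : c ≠ 0 := fun h => by simp [h] at hc
  set b := OrthonormalBasis.fromOrthogonalSpanSingleton (𝕜 := ℝ) m hc0 with hb
  set φ : EuclideanSpace ℝ (Fin m) → Vec d := fun x => ((b.repr.symm x : (ℝ ∙ c)ᗮ) : Vec d)
    with hφdef
  have hφ : Isometry φ := isometry_subtype_coe.comp b.repr.symm.isometry
  have hGsubφ : g '' cap ⊆ φ '' Metric.closedBall 0 δ := by
    rintro w hw
    have hwδ : ‖w‖ ≤ δ := hGδ w hw
    obtain ⟨u, hu, rfl⟩ := hw
    have hmem : g u ∈ (ℝ ∙ c)ᗮ := by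
      rw [Submodule.mem_orthogonal_singleton_iff_inner_right, hg]
      simp only
      rw [inner_sub_right, real_inner_smul_right, hcc, real_inner_comm]
      ring
    refine ⟨b.repr ⟨g u, hmem⟩, ?_, ?_⟩
    · rw [Metric.mem_closedBall, dist_zero_right, b.repr.norm_map]
      exact hGδ _ ⟨u, hu, rfl⟩
    · rw [hφdef]
      simp only [LinearIsometryEquiv.symm_apply_apply]
  have h3' : μH[(m : ℝ)] (g '' cap) ≤ μH[(m : ℝ)] (φ '' Metric.closedBall 0 δ) :=
    measure_mono hGsubφ
  have h4' : μH[(m : ℝ)] (φ '' Metric.closedBall 0 δ) =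
      μH[(m : ℝ)] (Metric.closedBall (0 : EuclideanSpace ℝ (Fin m)) δ) :=
    hφ.hausdorffMeasure_image (Or.inl hmpos) _
  -- compare with sup-norm pi space
  set e := WithLp.equiv 2 (Fin m → ℝ) with he
  have hanti := PiLp.antilipschitzWith_ofLp 2 (fun _ : Fin m => ℝ)
  have hesymm : LipschitzWith ((Fintype.card (Fin m) : ℝ≥0) ^ (1 / (2:ℝ≥0∞)).toReal) e.symm :=
    hanti.to_rightInverse e.right_inv
  have hKle : ((Fintype.card (Fin m) : ℝ≥0) ^ (1 / (2:ℝ≥0∞)).toReal) ≤ (m : ℝ≥0) := by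
    rw [Fintype.card_fin]
    have h1m : (1 : ℝ≥0) ≤ (m : ℝ≥0) := by exact_mod_cast (by omega : 1 ≤ m)
    calc (m:ℝ≥0) ^ (1/(2:ℝ≥0∞)).toReal ≤ (m:ℝ≥0) ^ (1:ℝ) := by
          apply NNReal.rpow_le_rpow_of_exponent_le h1m
          rw [ENNReal.toReal_div]
          norm_num
      _ = (m : ℝ≥0) := NNReal.rpow_one _
  have hesymm' : LipschitzWith (m : ℝ≥0) e.symm := hesymm.weaken hKle
  have hsub2 : Metric.closedBall (0 : EuclideanSpace ℝ (Fin m)) δ ⊆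
      e.symm '' Metric.closedBall (0 : Fin m → ℝ) δ := by
    intro x hx
    refine ⟨e x, ?_, e.symm_apply_apply x⟩
    rw [Metric.mem_closedBall] at hx ⊢
    have h8 := (PiLp.lipschitzWith_ofLp 2 (fun _ : Fin m => ℝ)).dist_le_mul x 0
    simp only [NNReal.coe_one, one_mul] at h8
    have he0 : e (0 : EuclideanSpace ℝ (Fin m)) = 0 := rfl
    calc dist (e x) 0 = dist (e x) (e 0) := by rw [he0]
      _ ≤ dist x 0 := h8
      _ ≤ δ := hx
  have h5' : μH[(m : ℝ)] (Metric.closedBall (0 : EuclideanSpace ℝ (Fin m)) δ) ≤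
      ((m : ℝ≥0) : ℝ≥0∞) ^ (m : ℝ) * μH[(m : ℝ)] (Metric.closedBall (0 : Fin m → ℝ) δ) :=
    le_trans (measure_mono hsub2) (hesymm'.hausdorffMeasure_image_le hmpos _)
  have h6' : μH[(m : ℝ)] (Metric.closedBall (0 : Fin m → ℝ) δ) = ENNReal.ofReal ((2 * δ) ^ m) := by
    have hcard : ((m : ℝ)) = ((Fintype.card (Fin m) : ℕ) : ℝ) := by simp
    rw [hcard, hausdorffMeasure_pi_real, Real.volume_pi_closedBall 0 hδ0, Fintype.card_fin]
  -- put everything together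
  have h1' : μH[(m : ℝ)] cap ≤ μH[(m : ℝ)] (f '' (g '' cap)) := measure_mono hA
  have h2' : μH[(m : ℝ)] (f '' (g '' cap)) ≤
      ((2 : ℝ≥0) : ℝ≥0∞) ^ (m : ℝ) * μH[(m : ℝ)] (g '' cap) :=
    (hLip.mono hGsub).hausdorffMeasure_image_le hmpos
  have hfinal : μH[(m : ℝ)] cap ≤
      ((2 : ℝ≥0) : ℝ≥0∞) ^ (m : ℝ) *
        (((m : ℝ≥0) : ℝ≥0∞) ^ (m : ℝ) * ENNReal.ofReal ((2 * δ) ^ m)) := by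
    calc μH[(m : ℝ)] cap ≤ ((2 : ℝ≥0) : ℝ≥0∞) ^ (m : ℝ) * μH[(m : ℝ)] (g '' cap) :=
          le_trans h1' h2'
      _ ≤ _ := by
          apply mul_le_mul_right
          rw [← h6']
          exact le_trans (le_of_le_of_eq h3' h4') h5'
  refine le_trans hfinal (le_of_eq ?_)
  rw [ENNReal.rpow_natCast, ENNReal.rpow_natCast]
  have e2 : ((2 : ℝ≥0) : ℝ≥0∞) = ENNReal.ofReal 2 := by norm_num
  have em : ((m : ℝ≥0) : ℝ≥0∞) = ENNReal.ofReal (m : ℝ) := by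
    rw [ENNReal.ofReal_natCast]; norm_cast
  rw [e2, em, ← ENNReal.ofReal_pow (by norm_num), ← ENNReal.ofReal_pow hmpos,
    ← ENNReal.ofReal_mul (by positivity), ← ENNReal.ofReal_mul (by positivity)]
  congr 1
  rw [← mul_pow, ← mul_pow]
  ring_nf


set_option maxHeartbeats 1000000 in
private lemma mem_cap_of_close {d : ℕ} {u v : Vec d} {s ε t : ℝ}
    (hu : ‖u‖ = 1) (hs : 0 < s) (hε : 0 < ε) (hv : ε ≤ ‖v‖) (ht : 2 / ε ≤ t)
    (h : ‖s • u - v‖ ≤ 1 / t) :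
    ‖u - ‖v‖⁻¹ • v‖ ≤ Real.sqrt 2 / (t * ε) := by
  have ht0 : 0 < t := lt_of_lt_of_le (by positivity) ht
  have h2εt : 2 ≤ ε * t := by rw [div_le_iff₀ hε] at ht; linarith
  have hV : 0 < ‖v‖ := lt_of_lt_of_le hε hv
  have hsq : ‖s • u - v‖ ^ 2 = s ^ 2 - 2 * (s * ⟪u, v⟫) + ‖v‖ ^ 2 := by
    rw [norm_sub_sq_real, real_inner_smul_left, norm_smul, hu, Real.norm_eq_abs,
      abs_of_pos hs, mul_one]
  have key : s ^ 2 - 2 * (s * ⟪u, v⟫) + ‖v‖ ^ 2 ≤ (1 / t) ^ 2 := by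
    rw [← hsq]; exact pow_le_pow_left₀ (norm_nonneg _) h 2
  have h1t : 1 / t ≤ ε / 2 := by
    rw [div_le_div_iff₀ ht0 two_pos]; linarith
  have h1t2 : (1 / t) ^ 2 ≤ (ε / 2) ^ 2 := pow_le_pow_left₀ (by positivity) h1t 2
  have hεv : ε ^ 2 ≤ ‖v‖ ^ 2 := by nlinarith
  have hppos : 0 < ⟪u, v⟫ := by
    by_contra h'
    push_neg at h'
    have hsp : s * ⟪u, v⟫ ≤ 0 := mul_nonpos_of_nonneg_of_nonpos hs.le h'
    nlinarith [sq_nonneg s]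
  have hvp : ‖v‖ ^ 2 - ⟪u, v⟫ ^ 2 ≤ (1 / t) ^ 2 := by
    nlinarith [sq_nonneg (s - ⟪u, v⟫)]
  have hpV : ⟪u, v⟫ ≤ ‖v‖ := by
    have := real_inner_le_norm u v; rwa [hu, one_mul] at this
  have hinv : (1 / t) ^ 2 * t ^ 2 = 1 := by field_simp
  have h6 : (‖v‖ ^ 2 - ⟪u, v⟫ ^ 2) * t ^ 2 ≤ 1 := by
    calc (‖v‖ ^ 2 - ⟪u, v⟫ ^ 2) * t ^ 2 ≤ (1 / t) ^ 2 * t ^ 2 :=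
          mul_le_mul_of_nonneg_right hvp (sq_nonneg t)
      _ = 1 := hinv
  have hεV2 : ε ^ 2 ≤ ‖v‖ * (‖v‖ + ⟪u, v⟫) := by nlinarith
  have claim : (‖v‖ - ⟪u, v⟫) * (t * ε) ^ 2 ≤ ‖v‖ := by
    nlinarith [mul_le_mul_of_nonneg_left h6 hV.le,
      mul_nonneg (mul_nonneg (sub_nonneg.2 hpV) (sq_nonneg t)) (sub_nonneg.2 hεV2)]
  have hnc : ‖u - ‖v‖⁻¹ • v‖ ^ 2 = 2 - 2 * (‖v‖⁻¹ * ⟪u, v⟫) := by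
    rw [norm_sub_sq_real, real_inner_smul_right, norm_smul, hu, Real.norm_eq_abs,
      abs_of_pos (inv_pos.2 hV), inv_mul_cancel₀ hV.ne']
    ring
  have hδsq : (Real.sqrt 2 / (t * ε)) ^ 2 = 2 / (t * ε) ^ 2 := by
    rw [div_pow, Real.sq_sqrt (by norm_num : (0:ℝ) ≤ 2)]
  refine sq_le_imp' (norm_nonneg _) (by positivity) ?_
  rw [hnc, hδsq]
  have hId : 2 - 2 * (‖v‖⁻¹ * ⟪u, v⟫) = 2 * (‖v‖ - ⟪u, v⟫) / ‖v‖ := by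
    field_simp
  rw [hId, div_le_div_iff₀ hV (by positivity)]
  nlinarith [claim]


end Helpers

set_option maxHeartbeats 1000000 in
theorem statement16
    {Ω : Type*} [MeasurableSpace Ω] (P : Measure Ω) [IsProbabilityMeasure P]
    {d : ℕ} (hd : 3 ≤ d)
    (μ : Vec d) (r : ℝ) (hr : 0 < r)
    (W : Ω → ℝ) (U : Ω → Vec d)
    (hWm : Measurable W) (hUm : Measurable U)
    (hWpos : ∀ ω, 0 < W ω) (hUnorm : ∀ ω, ‖U ω‖ = 1)
    (hindep : IndepFun W U P)
    (X : Ω → Vec d) (hX : ∀ ω, X ω = μ + (r * W ω) • U ω)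
    (S : Set (Vec d)) (hSm : MeasurableSet S) (hSsub : S ⊆ Metric.sphere (0 : Vec d) 1)
    (hSpos : 0 < μH[(d : ℝ) - 1] S) (hSfin : μH[(d : ℝ) - 1] S < ⊤)
    (hlaw : Measure.map U P = (μH[(d : ℝ) - 1] S)⁻¹ • (μH[(d : ℝ) - 1] : Measure (Vec d)).restrict S)
    :
    ∀ ε : ℝ, 0 < ε → ∃ k : ℝ, 0 < k ∧ ∀ z : Vec d, ε ≤ ‖z - μ‖ →
      ∀ t : ℝ, 2 / ε ≤ t →
        P {ω | ‖X ω - z‖ ≤ 1 / t} ≤ ENNReal.ofReal (k / t ^ (d - 1)) := by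
  intro ε hε
  set h : ℝ := (μH[(d : ℝ) - 1] S).toReal with hh_def
  have hh : 0 < h := ENNReal.toReal_pos hSpos.ne' hSfin.ne
  set A : ℝ := (4 * ((d : ℝ) - 1) * (Real.sqrt 2 / ε)) ^ (d - 1) with hA_def
  have hA0 : 0 ≤ A := by
    rw [hA_def]
    apply pow_nonneg
    have : (0:ℝ) ≤ (d : ℝ) - 1 := by
      have : (3:ℝ) ≤ (d:ℝ) := by exact_mod_cast hd
      linarith
    positivity
  refine ⟨h⁻¹ * A + 1, by positivity, ?_⟩
  intro z hz t ht
  have ht0 : 0 < t := lt_of_lt_of_le (by positivity) ht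
  have h2εt : 2 ≤ ε * t := by rw [div_le_iff₀ hε] at ht; linarith
  set v : Vec d := z - μ with hv_def
  have hV : 0 < ‖v‖ := lt_of_lt_of_le hε hz
  set c : Vec d := ‖v‖⁻¹ • v with hc_def
  have hcnorm : ‖c‖ = 1 := by
    rw [hc_def, norm_smul, Real.norm_eq_abs, abs_of_pos (inv_pos.2 hV), inv_mul_cancel₀ hV.ne']
  set δ : ℝ := Real.sqrt 2 / (t * ε) with hδ_def
  have hδ0 : 0 ≤ δ := by positivity
  have hδsq : δ ^ 2 ≤ 1 / 2 := by
    rw [hδ_def, div_pow, Real.sq_sqrt (by norm_num : (0:ℝ) ≤ 2),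
      div_le_div_iff₀ (by positivity) two_pos]
    nlinarith
  have hsubset : {ω | ‖X ω - z‖ ≤ 1 / t} ⊆ U ⁻¹' (Metric.closedBall c δ) := by
    intro ω hω
    simp only [Set.mem_setOf_eq] at hω
    have hXz : X ω - z = (r * W ω) • U ω - v := by
      rw [hX ω, hv_def]; abel
    rw [hXz] at hω
    have := mem_cap_of_close (hUnorm ω) (mul_pos hr (hWpos ω)) hε hz ht hω
    rw [Set.mem_preimage, Metric.mem_closedBall, dist_eq_norm]
    exact this
  calc P {ω | ‖X ω - z‖ ≤ 1 / t} ≤ P (U ⁻¹' Metric.closedBall c δ) := measure_mono hsubset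
    _ = Measure.map U P (Metric.closedBall c δ) :=
        (Measure.map_apply hUm measurableSet_closedBall).symm
    _ = (μH[(d : ℝ) - 1] S)⁻¹ * μH[(d : ℝ) - 1] (Metric.closedBall c δ ∩ S) := by
        rw [hlaw, Measure.smul_apply, smul_eq_mul,
          Measure.restrict_apply measurableSet_closedBall]
    _ ≤ (μH[(d : ℝ) - 1] S)⁻¹ *
        μH[(d : ℝ) - 1] ({u : Vec d | ‖u‖ = 1} ∩ Metric.closedBall c δ) := by
        apply mul_le_mul_right
        apply measure_mono
        rintro x ⟨hx1, hx2⟩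
        exact ⟨mem_sphere_zero_iff_norm.1 (hSsub hx2), hx1⟩
    _ ≤ (μH[(d : ℝ) - 1] S)⁻¹ * ENNReal.ofReal ((4 * ((d : ℝ) - 1) * δ) ^ (d - 1)) :=
        mul_le_mul_right (cap_bound_s16 hd hcnorm hδ0 hδsq) _
    _ = ENNReal.ofReal (h⁻¹ * (4 * ((d : ℝ) - 1) * δ) ^ (d - 1)) := by
        rw [ENNReal.ofReal_mul (by positivity)]
        congr 1
        rw [ENNReal.ofReal_inv_of_pos hh, hh_def, ENNReal.ofReal_toReal hSfin.ne]
    _ ≤ ENNReal.ofReal ((h⁻¹ * A + 1) / t ^ (d - 1)) := by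
        apply ENNReal.ofReal_le_ofReal
        have hδ' : δ = (Real.sqrt 2 / ε) / t := by
          rw [hδ_def, div_div, mul_comm]
        have hkey : (4 * ((d : ℝ) - 1) * δ) ^ (d - 1) = A / t ^ (d - 1) := by
          rw [hA_def, ← div_pow, hδ', mul_div_assoc]
        rw [hkey, mul_div_assoc' h⁻¹ A (t ^ (d - 1))]
        have htpow : (0:ℝ) < t ^ (d - 1) := by positivity
        gcongr
        linarith

end
end

section
/- Under Assumptions [A1] and [A2], if E[U] = 0, E[U Uᵀ] = (1/d)·I_d, and β := E[W]·E[W^{−1}] < d/(d−1), then the matrix Γ_θ is positive definite (i.e., Assumption [A4] holds). -/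
open MeasureTheory ProbabilityTheory Filter
open scoped ENNReal NNReal RealInnerProductSpace Topology

noncomputable section

set_option maxHeartbeats 2000000 in
theorem statement19
    {Ω : Type*} [MeasurableSpace Ω] (P : Measure Ω) [IsProbabilityMeasure P]
    {d : ℕ} (hd : 2 ≤ d)
    (μ : Vec d) (r : ℝ) (hr : 0 < r)
    (W : Ω → ℝ) (U : Ω → Vec d)
    (hWm : Measurable W) (hUm : Measurable U)
    (hWpos : ∀ ω, 0 < W ω) (hUnorm : ∀ ω, ‖U ω‖ = 1)
    (hindep : IndepFun W U P)
    (X : Ω → Vec d) (hX : ∀ ω, X ω = μ + (r * W ω) • U ω)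
    (rstar : ℝ) (hrstar : rstar = r * ∫ ω, W ω ∂P)
    (hA1 : Integrable (fun ω => (‖X ω - μ‖ ^ 2)⁻¹) P)
    (hA2 : Integrable (fun ω => ‖X ω - μ‖ ^ 2) P)
    (hEU : (∫ ω, U ω ∂P) = 0)
    (hUU : ∀ v : Vec d, (∫ ω, ⟪U ω, v⟫ • U ω ∂P) = (d : ℝ)⁻¹ • v)
    (hβ : (∫ ω, W ω ∂P) * (∫ ω, (W ω)⁻¹ ∂P) < (d : ℝ) / ((d : ℝ) - 1))
    :
    ∀ y : Par d, y ≠ 0 → 0 < ⟪y, GammaAt P X (pmk μ rstar) y⟫ := by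
  intro y hy
  have hrne : r ≠ 0 := hr.ne'
  have hrW : ∀ ω, 0 < r * W ω := fun ω => mul_pos hr (hWpos ω)
  have hXμ : ∀ ω, X ω - μ = (r * W ω) • U ω := fun ω => by rw [hX]; abel
  have hnorm : ∀ ω, ‖X ω - μ‖ = r * W ω := fun ω => by
    rw [hXμ, norm_smul, hUnorm, mul_one, Real.norm_eq_abs, abs_of_pos (hrW ω)]
  set z : Vec d := pz y with hz
  set a : ℝ := pa y with ha
  -- Integrability of W⁻¹
  have hW2 : Integrable (fun ω => ((W ω)⁻¹) ^ 2) P := by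
    have h1 : (fun ω => r ^ 2 * (‖X ω - μ‖ ^ 2)⁻¹) = fun ω => ((W ω)⁻¹) ^ 2 := by
      funext ω
      rw [hnorm, mul_pow, mul_inv, ← mul_assoc, mul_inv_cancel₀ (pow_ne_zero 2 hrne), one_mul,
        inv_pow]
    rw [← h1]
    exact hA1.const_mul _
  have hWinv : Integrable (fun ω => (W ω)⁻¹) P := by
    refine Integrable.mono' ((integrable_const (1:ℝ)).add hW2)
      hWm.inv.aestronglyMeasurable (ae_of_all _ fun ω => ?_)
    have h0 : 0 < (W ω)⁻¹ := inv_pos.2 (hWpos ω)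
    rw [Real.norm_eq_abs, abs_of_pos h0]
    show (W ω)⁻¹ ≤ 1 + ((W ω)⁻¹) ^ 2
    nlinarith [sq_nonneg ((W ω)⁻¹ - 1)]
  -- The direction integral vanishes
  have hdir : (∫ ω, ‖X ω - μ‖⁻¹ • (X ω - μ) ∂P) = 0 := by
    have h1 : ∀ ω, ‖X ω - μ‖⁻¹ • (X ω - μ) = U ω := fun ω => by
      rw [hnorm, hXμ, smul_smul, inv_mul_cancel₀ (hrW ω).ne', one_smul]
    simp only [h1]
    exact hEU
  -- rewrite main integrand
  have hfeq : ∀ ω, ‖X ω - μ‖⁻¹ • (z - (⟪X ω - μ, z⟫ / ‖X ω - μ‖ ^ 2) • (X ω - μ))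
      = (r⁻¹ * (W ω)⁻¹) • (z - ⟪U ω, z⟫ • U ω) := by
    intro ω
    have hc : r * W ω * ⟪U ω, z⟫ / (r * W ω) ^ 2 * (r * W ω) = ⟪U ω, z⟫ := by
      have h := (hrW ω).ne'
      field_simp
      exact mul_div_cancel_left₀ _ (hWpos ω).ne'
    rw [hnorm, hXμ ω, real_inner_smul_left, smul_smul, hc, mul_inv]
  -- integrability of main integrand
  have hfmain : Integrable (fun ω => (r⁻¹ * (W ω)⁻¹) • (z - ⟪U ω, z⟫ • U ω)) P := by
    refine Integrable.mono' (hWinv.const_mul (r⁻¹ * (2 * ‖z‖)))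
      ((by fun_prop : Measurable (fun ω => (r⁻¹ * (W ω)⁻¹) • (z - ⟪U ω, z⟫ • U ω))
        ).aestronglyMeasurable)
      (ae_of_all _ fun ω => ?_)
    have hWi : 0 < (W ω)⁻¹ := inv_pos.2 (hWpos ω)
    have hri : 0 < r⁻¹ := inv_pos.2 hr
    have h1 : ‖z - ⟪U ω, z⟫ • U ω‖ ≤ 2 * ‖z‖ := by
      refine (norm_sub_le _ _).trans ?_
      rw [norm_smul, hUnorm, mul_one, Real.norm_eq_abs]
      have h2 := abs_real_inner_le_norm (U ω) z
      rw [hUnorm, one_mul] at h2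
      linarith
    rw [norm_smul, Real.norm_eq_abs, abs_of_pos (mul_pos hri hWi)]
    nlinarith [mul_le_mul_of_nonneg_left h1 (mul_pos hri hWi).le]
  -- E[⟪U,z⟫²] = ‖z‖²/d
  have hUUzint : Integrable (fun ω => ⟪U ω, z⟫ • U ω) P := by
    refine Integrable.mono' (integrable_const ‖z‖)
      ((by fun_prop : Measurable (fun ω => ⟪U ω, z⟫ • U ω)).aestronglyMeasurable)
      (ae_of_all _ fun ω => ?_)
    rw [norm_smul, hUnorm, mul_one, Real.norm_eq_abs]
    have h2 := abs_real_inner_le_norm (U ω) z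
    rwa [hUnorm, one_mul] at h2
  have hsq : (∫ ω, ⟪U ω, z⟫ ^ 2 ∂P) = (d:ℝ)⁻¹ * ‖z‖ ^ 2 := by
    have h3 := (innerSL ℝ z).integral_comp_comm hUUzint
    simp only [innerSL_apply_apply] at h3
    calc (∫ ω, ⟪U ω, z⟫ ^ 2 ∂P) = ∫ ω, ⟪z, ⟪U ω, z⟫ • U ω⟫ ∂P := by
          congr 1; funext ω
          rw [real_inner_smul_right, real_inner_comm]; ring
      _ = ⟪z, ∫ ω, ⟪U ω, z⟫ • U ω ∂P⟫ := h3
      _ = ⟪z, (d:ℝ)⁻¹ • z⟫ := by rw [hUU z]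
      _ = (d:ℝ)⁻¹ * ‖z‖ ^ 2 := by rw [real_inner_smul_right, real_inner_self_eq_norm_sq]
  have hsqint : Integrable (fun ω => ⟪U ω, z⟫ ^ 2) P := by
    refine Integrable.mono' (integrable_const (‖z‖ ^ 2))
      ((by fun_prop : Measurable (fun ω => ⟪U ω, z⟫ ^ 2)).aestronglyMeasurable)
      (ae_of_all _ fun ω => ?_)
    have h2 := abs_real_inner_le_norm (U ω) z
    rw [hUnorm, one_mul] at h2
    rw [Real.norm_eq_abs, abs_of_nonneg (sq_nonneg _)]
    nlinarith [abs_nonneg (⟪U ω, z⟫), sq_abs (⟪U ω, z⟫)]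
  -- the key scalar value
  have hIz : ⟪z, ∫ ω, (r⁻¹ * (W ω)⁻¹) • (z - ⟪U ω, z⟫ • U ω) ∂P⟫
      = r⁻¹ * ((∫ ω, (W ω)⁻¹ ∂P) * ((1 - (d:ℝ)⁻¹) * ‖z‖ ^ 2)) := by
    have h3 := (innerSL ℝ z).integral_comp_comm hfmain
    simp only [innerSL_apply_apply] at h3
    rw [← h3]
    have h4 : ∀ ω, ⟪z, (r⁻¹ * (W ω)⁻¹) • (z - ⟪U ω, z⟫ • U ω)⟫
        = r⁻¹ * ((W ω)⁻¹ * (‖z‖ ^ 2 - ⟪U ω, z⟫ ^ 2)) := fun ω => by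
      rw [real_inner_smul_right, inner_sub_right, real_inner_smul_right,
        real_inner_self_eq_norm_sq, real_inner_comm]
      ring
    simp only [h4]
    rw [integral_const_mul]
    congr 1
    have indep2 : IndepFun (fun ω => (W ω)⁻¹) (fun ω => ‖z‖ ^ 2 - ⟪U ω, z⟫ ^ 2) P :=
      hindep.comp measurable_inv
        (by fun_prop : Measurable (fun (u : Vec d) => ‖z‖ ^ 2 - ⟪u, z⟫ ^ 2))
    have hhint : Integrable (fun ω => ‖z‖ ^ 2 - ⟪U ω, z⟫ ^ 2) P :=
      (integrable_const _).sub hsqint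
    rw [show (fun ω => (W ω)⁻¹ * (‖z‖ ^ 2 - ⟪U ω, z⟫ ^ 2))
        = (fun ω => (W ω)⁻¹) * (fun ω => ‖z‖ ^ 2 - ⟪U ω, z⟫ ^ 2) from rfl,
      indep2.integral_mul_eq_mul_integral hWinv.aestronglyMeasurable hhint.aestronglyMeasurable]
    congr 1
    rw [integral_sub (integrable_const _) hsqint, integral_const, probReal_univ, hsq]
    simp only [ENNReal.toReal_one, smul_eq_mul, one_mul]
    ring
  -- compute the quadratic form
  set β : ℝ := (∫ ω, W ω ∂P) * (∫ ω, (W ω)⁻¹ ∂P) with hβdef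
  have hQ : ⟪y, GammaAt P X (pmk μ rstar) y⟫ = (1 - β * (1 - (d:ℝ)⁻¹)) * ‖z‖ ^ 2 + a ^ 2 := by
    have hG : GammaAt P X (pmk μ rstar) y
        = pmk (z - rstar • (∫ ω, (r⁻¹ * (W ω)⁻¹) • (z - ⟪U ω, z⟫ • U ω) ∂P)) a := by
      unfold GammaAt
      rw [show pz (pmk μ rstar) = μ from rfl, show pa (pmk μ rstar) = rstar from rfl,
        hdir, ← hz, ← ha, smul_zero, add_zero, inner_zero_left, zero_add]
      congr 3
      exact integral_congr_ae (ae_of_all _ hfeq)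
    rw [hG]
    have hinner : ∀ (A : Vec d) (B : ℝ), ⟪y, pmk A B⟫ = ⟪z, A⟫ + a * B := fun A B => by
      rw [WithLp.prod_inner_apply]; exact congrArg₂ (· + ·) rfl (mul_comm _ _)
    rw [hinner, inner_sub_right, real_inner_smul_right, hIz, real_inner_self_eq_norm_sq,
      hrstar, hβdef]
    field_simp
  rw [hQ]
  -- positivity
  have hd2 : (2:ℝ) ≤ (d:ℝ) := by exact_mod_cast hd
  have hdpos : (0:ℝ) < d := by linarith
  have hd1pos : (0:ℝ) < (d:ℝ) - 1 := by linarith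
  have hcpos : 0 < 1 - β * (1 - (d:ℝ)⁻¹) := by
    have h1 : (1:ℝ) - (d:ℝ)⁻¹ = ((d:ℝ) - 1) / d := by field_simp
    have h2 := mul_lt_mul_of_pos_right hβ (div_pos hd1pos hdpos)
    rw [div_mul_div_comm, mul_comm ((d:ℝ)-1) (d:ℝ), div_self (by positivity)] at h2
    rw [h1]
    linarith
  have hzero : z ≠ 0 ∨ a ≠ 0 := by
    by_contra h
    push_neg at h
    apply hy
    have : y = pmk z a := rfl
    rw [this, h.1, h.2]
    rfl
  rcases hzero with hz0 | ha0
  · have h1 : 0 < ‖z‖ ^ 2 := pow_pos (norm_pos_iff.mpr hz0) 2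
    nlinarith [sq_nonneg a]
  · have h1 : 0 < a ^ 2 := by positivity
    nlinarith [sq_nonneg ‖z‖, mul_nonneg hcpos.le (sq_nonneg ‖z‖)]

end
end
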